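/- arXiv:2309.11255 — 8 statements merged into one kernel-verified Lean document; each statement's English description precedes it below -/
import Mathlib

section
/- Let C ⊆ ℝⁿ be a closed convex cone and let A be a real n×n matrix. Then A ∈ M(C) if and only if A is cross-positive on C, i.e., for all x ∈ C and ξ ∈ C^∨ with ⟨x, ξ⟩ = 0 one has ⟨Ax, ξ⟩ ≥ 0. -/
open Matrix

/-- The dual cone of a set `C ⊆ ℝⁿ`. -/
def dualCone {n : ℕ} (C : Set (Fin n → ℝ)) : Set (Fin n → ℝ) :=
  {y | ∀ x ∈ C, 0 ≤ x ⬝ᵥ y}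

/-- `A ∈ M(C)`: for every `t ≥ 0` the matrix exponential `exp(tA)` maps `C` into `C`. -/
def memM {n : ℕ} (C : Set (Fin n → ℝ)) (A : Matrix (Fin n) (Fin n) ℝ) : Prop :=
  ∀ t : ℝ, 0 ≤ t → ∀ x ∈ C, (NormedSpace.exp (t • A)).mulVec x ∈ C

open NormedSpace Metric Set Filter
open scoped RealInnerProductSpace
attribute [local instance] Matrix.linftyOpNormedRing Matrix.linftyOpNormedAlgebra
  Matrix.linftyOpNormedSpace

def toE {n : ℕ} (v : Fin n → ℝ) : EuclideanSpace ℝ (Fin n) := WithLp.toLp 2 v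

lemma inner_eq_dot {n : ℕ} (x y : EuclideanSpace ℝ (Fin n)) :
    ⟪x, y⟫ = (x : Fin n → ℝ) ⬝ᵥ (y : Fin n → ℝ) := by
  simp [PiLp.inner_apply, dotProduct, RCLike.inner_apply, mul_comm]


set_option maxHeartbeats 2000000 in
/-- A matrix `A` belongs to `M(C)` iff it is cross-positive on `C`. -/
theorem memM_iff_crossPositive {n : ℕ} (C : Set (Fin n → ℝ))
    (hclosed : IsClosed C) (hconv : Convex ℝ C)
    (hcone : ∀ x ∈ C, ∀ t : ℝ, 0 < t → t • x ∈ C)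
    (A : Matrix (Fin n) (Fin n) ℝ) :
    memM C A ↔ ∀ x ∈ C, ∀ ξ ∈ dualCone C, x ⬝ᵥ ξ = 0 → 0 ≤ A.mulVec x ⬝ᵥ ξ := by
  constructor
  · intro h
    intro x hx ξ hξ horth
    set f : ℝ → ℝ := fun t => (exp (t • A)).mulVec x ⬝ᵥ ξ with hf
    have hf0 : f 0 = 0 := by
      simp [hf, zero_smul, exp_zero, Matrix.one_mulVec, horth]
    have hfpos : ∀ t, 0 < t → 0 ≤ f t := fun t htpos =>
      hξ _ (h t htpos.le x hx)
    -- derivative of f at 0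
    have hd : HasDerivAt f (A.mulVec x ⬝ᵥ ξ) 0 := by
      have h1 := hasDerivAt_exp_smul_const' (𝕂 := ℝ) A (0 : ℝ)
      let φ : Matrix (Fin n) (Fin n) ℝ →ₗ[ℝ] ℝ :=
        { toFun := fun M => M.mulVec x ⬝ᵥ ξ
          map_add' := by intro M N; simp [Matrix.add_mulVec, add_dotProduct]
          map_smul' := by intro c M; simp [Matrix.smul_mulVec, smul_dotProduct] }
      have h2 := (φ.toContinuousLinearMap.hasFDerivAt).comp_hasDerivAt 0 h1
      have h3 : φ.toContinuousLinearMap (A * exp ((0:ℝ) • A)) = A.mulVec x ⬝ᵥ ξ := by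
        simp [φ, zero_smul, exp_zero]
      exact h2.congr_deriv h3
    have hdw := (hd.hasDerivWithinAt (s := Ioi 0))
    rw [hasDerivWithinAt_iff_tendsto_slope] at hdw
    have hIoi : (Ioi (0:ℝ)) \ {0} = Ioi 0 := by
      ext z; simp (config := {contextual := true}) [LT.lt.ne']
    rw [hIoi] at hdw
    refine ge_of_tendsto hdw ?_
    filter_upwards [self_mem_nhdsWithin] with z hz
    have hz' : (0:ℝ) < z := hz
    rw [slope_def_field]
    have := hfpos z hz'
    have : 0 ≤ (f z - f 0) / (z - 0) := by
      apply div_nonneg <;> [linarith; linarith]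
    simpa [div_eq_inv_mul] using this
  · intro h
    intro t ht x₀ hx₀
    classical
    set E := EuclideanSpace ℝ (Fin n) with hE
    set CE : Set E := WithLp.ofLp ⁻¹' C with hCE
    have hclosedE : IsClosed CE := hclosed.preimage (PiLp.continuous_ofLp ..)
    have hconvE : Convex ℝ CE := hconv.linear_preimage (WithLp.linearEquiv 2 ℝ (Fin n → ℝ)).toLinearMap
    have hCne : CE.Nonempty := ⟨toE x₀, hx₀⟩
    -- projection onto CE
    have hproj : ∀ y : E, ∃ q ∈ CE, infDist y CE = dist y q ∧
        ∀ w ∈ CE, ⟪y - q, w - q⟫ ≤ 0 := by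
      intro y
      obtain ⟨q, hqC, hqd⟩ := hclosedE.exists_infDist_eq_dist hCne y
      refine ⟨q, hqC, hqd, ?_⟩
      have hinf : ‖y - q‖ = ⨅ w : CE, ‖y - w‖ := by
        rw [← dist_eq_norm, ← hqd, infDist_eq_iInf]
        simp_rw [dist_eq_norm]
      exact (norm_eq_iInf_iff_real_inner_le_zero hconvE hqC).mp hinf
    choose q hq1 hq2 hq3 using hproj
    -- facts about the projection and cross-positivity
    have hkey : ∀ y : E, ⟪toE (A.mulVec (q y)), y - q y⟫ ≤ 0 := by
      intro y
      have hneg : (q y - y : E) = -(y - q y) := by module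
      have hqq : ⟪y - q y, q y⟫ = 0 := by
        have h1 : ⟪y - q y, (2:ℝ) • q y - q y⟫ ≤ 0 := by
          by_cases hq0 : q y = 0
          · simpa [hq0] using hq3 y (q y) (hq1 y)
          · exact hq3 y _ (hcone _ (hq1 y) 2 two_pos)
        have h0C : (0 : E) ∈ CE := by
          have hc : Continuous fun s : ℝ => s • toE x₀ := by continuity
          have h2 : Tendsto (fun s : ℝ => s • toE x₀) (nhdsWithin 0 (Ioi 0)) (nhds 0) := by
            have := hc.tendsto 0
            simp only [zero_smul] at this
            exact this.mono_left nhdsWithin_le_nhds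
          exact hclosedE.mem_of_tendsto h2
            (eventually_nhdsWithin_of_forall fun s hs => hcone _ hx₀ s hs)
        have h2 : ⟪y - q y, (0:E) - q y⟫ ≤ 0 := hq3 y 0 h0C
        have e1 : ((2:ℝ) • q y - q y : E) = q y := by module
        rw [e1] at h1
        have e2 : ((0:E) - q y) = -(q y) := by module
        rw [e2, inner_neg_right] at h2
        linarith
      have hdual : ((q y - y : E) : Fin n → ℝ) ∈ dualCone C := by
        intro w hw
        have h4 : ⟪y - q y, toE w⟫ ≤ 0 := by
          have h5 := hq3 y (toE w) hw
          rw [inner_sub_right, hqq] at h5; linarith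
        have e : (w : Fin n → ℝ) ⬝ᵥ ((q y - y : E) : Fin n → ℝ) = -⟪y - q y, toE w⟫ := by
          show (toE w).ofLp ⬝ᵥ _ = _
          rw [← inner_eq_dot, hneg, inner_neg_right, real_inner_comm]
        rw [e]; linarith
      have horth : ((q y : Fin n → ℝ)) ⬝ᵥ ((q y - y : E) : Fin n → ℝ) = 0 := by
        rw [← inner_eq_dot, hneg, inner_neg_right, real_inner_comm, hqq, neg_zero]
      have h6 := h (q y) (hq1 y) _ hdual horth
      have e : A.mulVec (q y) ⬝ᵥ ((q y - y : E) : Fin n → ℝ) =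
          -⟪toE (A.mulVec (q y)), y - q y⟫ := by
        rw [← inner_eq_dot, hneg, inner_neg_right]; rfl
      rw [e] at h6; linarith
    -- the trajectory
    set x : ℝ → E := fun s => toE ((exp (s • A)).mulVec x₀) with hxdef
    have hx_deriv : ∀ s : ℝ, HasDerivAt x (toE (A.mulVec (x s))) s := by
      intro s
      have h1 := hasDerivAt_exp_smul_const' (𝕂 := ℝ) A s
      let φ : Matrix (Fin n) (Fin n) ℝ →ₗ[ℝ] E :=
        { toFun := fun M => toE (M.mulVec x₀)
          map_add' := by intro M N; show toE _ = toE _ + toE _; simp [toE, Matrix.add_mulVec]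
          map_smul' := by
            intro c M; show toE _ = c • toE _; simp [toE, Matrix.smul_mulVec, WithLp.toLp_smul] }
      have h2 := (φ.toContinuousLinearMap.hasFDerivAt).comp_hasDerivAt s h1
      have h3 : φ.toContinuousLinearMap (A * exp (s • A)) = toE (A.mulVec (x s)) := by
        show toE ((A * exp (s • A)).mulVec x₀) = toE (A.mulVec ((exp (s • A)).mulVec x₀))
        rw [← Matrix.mulVec_mulVec]
      exact h2.congr_deriv h3
    have hx_cont : Continuous x := by
      rw [continuous_iff_continuousAt]; exact fun s => (hx_deriv s).continuousAt
    -- the squared distance function and its "derivative"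
    set f : ℝ → ℝ := fun s => (infDist (x s) CE) ^ 2 with hfdef
    set f' : ℝ → ℝ := fun s => 2 * ⟪toE (A.mulVec (x s)), x s - q (x s)⟫ with hf'def
    have hf_cont : Continuous f := ((continuous_infDist_pt CE).comp hx_cont).pow 2
    have hg : ∀ (s : ℝ) (w : E), HasDerivAt (fun z => ⟪x z - w, x z - w⟫)
        (2 * ⟪toE (A.mulVec (x s)), x s - w⟫) s := by
      intro s w
      have h1 := HasDerivAt.inner ℝ ((hx_deriv s).sub_const w) ((hx_deriv s).sub_const w)
      refine h1.congr_deriv ?_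
      rw [real_inner_comm]; ring
    have hf_eq : ∀ s : ℝ, f s = ⟪x s - q (x s), x s - q (x s)⟫ := by
      intro s
      rw [real_inner_self_eq_norm_sq, ← dist_eq_norm, ← hq2]
    have hf_le : ∀ (s z : ℝ), f z ≤ ⟪x z - q (x s), x z - q (x s)⟫ := by
      intro s z
      rw [real_inner_self_eq_norm_sq, ← dist_eq_norm]
      exact pow_le_pow_left₀ infDist_nonneg (infDist_le_dist_of_mem (hq1 (x s))) 2
    -- Gronwall slope hypothesis
    have hslope : ∀ s ∈ Ico 0 t, ∀ r, f' s < r →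
        ∃ᶠ z in nhdsWithin s (Ioi s), (z - s)⁻¹ * (f z - f s) < r := by
      intro s _ r hr
      have hgd := ((hg s (q (x s))).hasDerivWithinAt (s := Ioi s))
      rw [hasDerivWithinAt_iff_tendsto_slope, Set.diff_singleton_eq_self notMem_Ioi_self] at hgd
      have hev := (tendsto_order.1 hgd).2 r hr
      refine ((hev.and self_mem_nhdsWithin).mono ?_).frequently
      rintro z ⟨hzr, hz⟩
      have hz' : (0:ℝ) < z - s := sub_pos.2 hz
      rw [slope_def_field, div_eq_inv_mul] at hzr
      calc (z - s)⁻¹ * (f z - f s)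
          ≤ (z - s)⁻¹ * (⟪x z - q (x s), x z - q (x s)⟫ - ⟪x s - q (x s), x s - q (x s)⟫) := by
            apply mul_le_mul_of_nonneg_left _ (inv_nonneg.2 hz'.le)
            have := hf_le s z
            rw [hf_eq s]
            linarith
        _ < r := hzr
    -- Gronwall bound hypothesis
    set K : ℝ := 2 * ∑ i, ∑ j, |A i j| with hKdef
    have hbound : ∀ s ∈ Ico 0 t, f' s ≤ K * f s + 0 := by
      intro s _
      set y : E := x s with hy
      set v : E := y - q y with hv
      set S : ℝ := ⟪v, v⟫ with hS
      have hvS : ∀ i, v i * v i ≤ S := by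
        intro i
        rw [hS, inner_eq_dot]
        exact Finset.single_le_sum (f := fun k => v k * v k)
          (fun k _ => mul_self_nonneg (v k)) (Finset.mem_univ i)
      have hsplit : toE (A.mulVec y) = toE (A.mulVec v) + toE (A.mulVec (q y)) := by
        have h7 : (v + q y : E) = y := by rw [hv]; module
        have h8 : A.mulVec ((v + q y : E) : Fin n → ℝ) = A.mulVec v + A.mulVec (q y) :=
          Matrix.mulVec_add A v (q y)
        conv_lhs => rw [← h7]
        rw [h8]; rfl
      have hAv : ⟪toE (A.mulVec v), v⟫ ≤ (∑ i, ∑ j, |A i j|) * S := by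
        rw [inner_eq_dot]
        calc A.mulVec v ⬝ᵥ (v : Fin n → ℝ) = ∑ i, ∑ j, A i j * v j * v i := by
              simp [dotProduct, Matrix.mulVec, Finset.sum_mul]
          _ ≤ ∑ i, ∑ j, |A i j| * S := by
              refine Finset.sum_le_sum fun i _ => Finset.sum_le_sum fun j _ => ?_
              have hb : |v j * v i| ≤ S := by
                have h1 := hvS i
                have h2 := hvS j
                have h3 := abs_mul (v j) (v i)
                nlinarith [sq_nonneg (|v j| - |v i|), sq_abs (v i), sq_abs (v j),
                  abs_nonneg (v i), abs_nonneg (v j)]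
              calc A i j * v j * v i = A i j * (v j * v i) := by ring
                _ ≤ |A i j * (v j * v i)| := le_abs_self _
                _ = |A i j| * |v j * v i| := abs_mul _ _
                _ ≤ |A i j| * S := mul_le_mul_of_nonneg_left hb (abs_nonneg _)
          _ = (∑ i, ∑ j, |A i j|) * S := by rw [Finset.sum_mul]; congr 1; ext i; rw [Finset.sum_mul]
      have hAq : ⟪toE (A.mulVec (q y)), v⟫ ≤ 0 := hkey y
      have hfS : f s = S := by rw [hf_eq s, hS]
      have hf's : f' s = 2 * (⟪toE (A.mulVec v), v⟫ + ⟪toE (A.mulVec (q y)), v⟫) := by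
        rw [hf'def]
        show 2 * ⟪toE (A.mulVec y), v⟫ = _
        rw [hsplit, inner_add_left]
      rw [hf's, hfS, hKdef]
      nlinarith [hAv, hAq]
    -- apply Gronwall
    have hf0 : f 0 ≤ 0 := by
      have hx0 : x 0 = toE x₀ := by
        show toE ((exp ((0:ℝ) • A)).mulVec x₀) = toE x₀
        rw [zero_smul, exp_zero, Matrix.one_mulVec]
      have : f 0 = infDist (x 0) CE ^ 2 := rfl
      rw [this, hx0, Metric.infDist_zero_of_mem (show toE x₀ ∈ CE from hx₀)]
      norm_num
    have hG := le_gronwallBound_of_liminf_deriv_right_le (f := f) (f' := f') (δ := 0) (K := K)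
      (ε := 0) (a := 0) (b := t) hf_cont.continuousOn hslope hf0 hbound t (by constructor <;> linarith)
    rw [gronwallBound_ε0] at hG
    have hft : f t = 0 := le_antisymm (by simpa using hG) (sq_nonneg _)
    have hdist : infDist (x t) CE = 0 := by
      have := pow_eq_zero_iff (n := 2) (by norm_num) |>.mp hft
      exact this
    show x t ∈ CE
    exact (hclosedE.mem_iff_infDist_zero hCne).mpr hdist
end

section
/- Let C ⊆ ℝⁿ be a closed convex cone. Then M(C) is a closed convex cone in the space of real n×n matrices: it is a closed set, it is convex, and it is closed under multiplication by nonnegative scalars. -/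
open Matrix Filter Topology NormedSpace

attribute [local instance] Matrix.linftyOpNormedRing Matrix.linftyOpNormedAlgebra

section aux
variable {n : ℕ}

local notation "𝕄" => Matrix (Fin n) (Fin n) ℝ

lemma aux_norm_one_le : ‖(1 : 𝕄)‖ ≤ 1 := by
  rw [← Matrix.diagonal_one, Matrix.linfty_opNorm_diagonal]
  exact (pi_norm_le_iff_of_nonneg zero_le_one).2 fun i => by simp

lemma aux_norm_pow_le (Y : 𝕄) (M : ℝ) (hM : 1 ≤ M) (hY : ‖Y‖ ≤ M) (k : ℕ) :
    ‖Y ^ k‖ ≤ M ^ k := by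
  rcases Nat.eq_zero_or_pos k with hk | hk
  · subst hk; rw [pow_zero, pow_zero]; exact aux_norm_one_le
  · exact (norm_pow_le' Y hk).trans (pow_le_pow_left₀ (norm_nonneg _) hY k)

lemma aux_norm_exp_le (x : 𝕄) : ‖exp x‖ ≤ Real.exp ‖x‖ := by
  rw [Real.exp_eq_exp_ℝ, exp_eq_tsum ℝ, exp_eq_tsum ℝ]
  refine (norm_tsum_le_tsum_norm (norm_expSeries_summable' x)).trans ?_
  refine Summable.tsum_le_tsum ?_ (norm_expSeries_summable' x) (expSeries_summable' (𝕂 := ℝ) ‖x‖)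
  intro k
  rw [norm_smul, smul_eq_mul, norm_inv, Real.norm_natCast]
  rcases Nat.eq_zero_or_pos k with hk | hk
  · subst hk
    simp only [Nat.factorial_zero, Nat.cast_one, inv_one, one_mul, pow_zero, smul_eq_mul,
      mul_one]
    exact aux_norm_one_le
  · exact mul_le_mul_of_nonneg_left (norm_pow_le' x hk) (by positivity)

lemma aux_pow_sub_pow (X Y : 𝕄) (M : ℝ) (hM : 1 ≤ M) (hX : ‖X‖ ≤ M) (hY : ‖Y‖ ≤ M) :
    ∀ k : ℕ, ‖X ^ k - Y ^ k‖ ≤ k * M ^ k * ‖X - Y‖ := by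
  intro k
  have hM0 : (0:ℝ) ≤ M := le_trans zero_le_one hM
  induction k with
  | zero => simp
  | succ k ih =>
      have key : X ^ (k+1) - Y ^ (k+1) = X * (X ^ k - Y ^ k) + (X - Y) * Y ^ k := by
        rw [mul_sub, sub_mul, pow_succ', pow_succ']
        abel
      have hMk : M ^ k ≤ M ^ (k+1) := by
        calc M ^ k = 1 * M ^ k := (one_mul _).symm
        _ ≤ M * M ^ k := by gcongr
        _ = M ^ (k+1) := (pow_succ' M k).symm
      calc ‖X ^ (k+1) - Y ^ (k+1)‖ ≤ ‖X * (X ^ k - Y ^ k)‖ + ‖(X - Y) * Y ^ k‖ := by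
            rw [key]; exact norm_add_le _ _
      _ ≤ ‖X‖ * ‖X ^ k - Y ^ k‖ + ‖X - Y‖ * ‖Y ^ k‖ :=
            add_le_add (norm_mul_le _ _) (norm_mul_le _ _)
      _ ≤ M * (k * M ^ k * ‖X - Y‖) + ‖X - Y‖ * M ^ k := by
            gcongr
            exact aux_norm_pow_le Y M hM hY k
      _ = k * (M * M ^ k) * ‖X - Y‖ + M ^ k * ‖X - Y‖ := by ring
      _ ≤ k * M ^ (k+1) * ‖X - Y‖ + M ^ (k+1) * ‖X - Y‖ := by
            rw [pow_succ']
            gcongr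
            exact le_mul_of_one_le_left (pow_nonneg hM0 k) hM
      _ = (↑(k+1)) * M ^ (k+1) * ‖X - Y‖ := by push_cast; ring

end aux

section trotter
variable {n : ℕ}
local notation "𝕄" => Matrix (Fin n) (Fin n) ℝ

lemma aux_trotter (U V : 𝕄) :
    Tendsto (fun k : ℕ => (exp ((k:ℝ)⁻¹ • U) * exp ((k:ℝ)⁻¹ • V)) ^ k) atTop
      (𝓝 (exp (U + V))) := by
  set h : ℝ → 𝕄 := fun s => exp (s • U) * exp (s • V) - exp (s • (U + V)) with hh_def
  -- the function h has value 0 and derivative 0 at 0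
  have hf : HasDerivAt (fun s : ℝ => exp (s • U) * exp (s • V)) (U + V) 0 := by
    have h1 := hasDerivAt_exp_smul_const (𝕂 := ℝ) U (0:ℝ)
    have h2 := hasDerivAt_exp_smul_const (𝕂 := ℝ) V (0:ℝ)
    have := h1.mul h2
    simp [zero_smul, exp_zero] at this
    exact this
  have hg : HasDerivAt (fun s : ℝ => exp (s • (U + V))) (U + V) 0 := by
    have := hasDerivAt_exp_smul_const (𝕂 := ℝ) (U + V) (0:ℝ)
    simp only [zero_smul, exp_zero, one_mul] at this
    exact this
  have hh : HasDerivAt h 0 0 := by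
    have := hf.sub hg
    rw [sub_self] at this
    exact this
  have h0 : h 0 = 0 := by simp [hh_def, zero_smul, exp_zero]
  -- slope tendsto
  have hslope : Tendsto (fun s : ℝ => s⁻¹ • h s) (𝓝[≠] (0:ℝ)) (𝓝 0) := by
    have := hasDerivAt_iff_tendsto_slope.mp hh
    refine this.congr fun s => ?_
    simp [slope, h0]
  have hinv : Tendsto (fun k : ℕ => ((k:ℝ))⁻¹) atTop (𝓝[≠] (0:ℝ)) := by
    refine tendsto_nhdsWithin_of_tendsto_nhds_of_eventually_within _
      (tendsto_inv_atTop_zero.comp tendsto_natCast_atTop_atTop) ?_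
    filter_upwards [eventually_ge_atTop 1] with k hk
    have : (0:ℝ) < (k:ℝ) := by exact_mod_cast hk
    exact inv_ne_zero (ne_of_gt this)
  have hmain : Tendsto (fun k : ℕ => (k:ℝ) • h ((k:ℝ)⁻¹)) atTop (𝓝 0) := by
    have := hslope.comp hinv
    refine this.congr' ?_
    filter_upwards [eventually_ge_atTop 1] with k hk
    have hk0 : (0:ℝ) < (k:ℝ) := by exact_mod_cast hk
    simp [Function.comp, inv_inv, hk0.ne']
  -- squeeze
  refine tendsto_iff_norm_sub_tendsto_zero.mpr ?_
  have hbound : ∀ᶠ k : ℕ in atTop,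
      ‖(exp ((k:ℝ)⁻¹ • U) * exp ((k:ℝ)⁻¹ • V)) ^ k - exp (U + V)‖ ≤
        Real.exp (‖U‖ + ‖V‖) * ‖(k:ℝ) • h ((k:ℝ)⁻¹)‖ := by
    filter_upwards [eventually_ge_atTop 1] with k hk
    have hk0 : (0:ℝ) < (k:ℝ) := by exact_mod_cast hk
    set X := exp ((k:ℝ)⁻¹ • U) * exp ((k:ℝ)⁻¹ • V) with hX_def
    set Y := exp ((k:ℝ)⁻¹ • (U + V)) with hY_def
    have hYk : Y ^ k = exp (U + V) := by
      have e := (NormedSpace.exp_nsmul k ((k:ℝ)⁻¹ • (U + V))).symm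
      rw [← Nat.cast_smul_eq_nsmul ℝ, smul_smul, mul_inv_cancel₀ hk0.ne', one_smul] at e
      exact e
    set M := Real.exp ((‖U‖ + ‖V‖) / k) with hM_def
    have hM1 : 1 ≤ M := Real.one_le_exp (by positivity)
    have hXM : ‖X‖ ≤ M := by
      refine (norm_mul_le _ _).trans ?_
      have h1 := aux_norm_exp_le ((k:ℝ)⁻¹ • U)
      have h2 := aux_norm_exp_le ((k:ℝ)⁻¹ • V)
      rw [norm_smul, norm_inv, Real.norm_natCast] at h1 h2
      calc ‖exp ((k:ℝ)⁻¹ • U)‖ * ‖exp ((k:ℝ)⁻¹ • V)‖ ≤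
          Real.exp ((k:ℝ)⁻¹ * ‖U‖) * Real.exp ((k:ℝ)⁻¹ * ‖V‖) := by
            exact mul_le_mul h1 h2 (norm_nonneg _) (Real.exp_nonneg _)
      _ = M := by rw [hM_def, ← Real.exp_add]; ring_nf
    have hYM : ‖Y‖ ≤ M := by
      refine (aux_norm_exp_le _).trans (Real.exp_le_exp.2 ?_)
      rw [norm_smul, norm_inv, Real.norm_natCast, div_eq_inv_mul]
      exact mul_le_mul_of_nonneg_left (norm_add_le _ _) (by positivity)
    have hMk : M ^ k = Real.exp (‖U‖ + ‖V‖) := by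
      rw [hM_def, ← Real.exp_nat_mul, mul_div_cancel₀ _ hk0.ne']
    have hXY : X - Y = h ((k:ℝ)⁻¹) := rfl
    calc ‖X ^ k - exp (U + V)‖ = ‖X ^ k - Y ^ k‖ := by rw [hYk]
    _ ≤ k * M ^ k * ‖X - Y‖ := aux_pow_sub_pow X Y M hM1 hXM hYM k
    _ = Real.exp (‖U‖ + ‖V‖) * ‖(k:ℝ) • h ((k:ℝ)⁻¹)‖ := by
        rw [hXY, norm_smul, Real.norm_natCast, hMk]; ring
  refine squeeze_zero' (Eventually.of_forall fun k => norm_nonneg _) hbound ?_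
  have := hmain.norm
  simp only [norm_zero] at this
  simpa using this.const_mul (Real.exp (‖U‖ + ‖V‖))

end trotter

lemma aux_pow_mulVec_mem {n : ℕ} (C : Set (Fin n → ℝ)) (P : Matrix (Fin n) (Fin n) ℝ)
    (hP : ∀ y ∈ C, P.mulVec y ∈ C) (k : ℕ) : ∀ y ∈ C, (P ^ k).mulVec y ∈ C := by
  induction k with
  | zero => intro y hy; simpa using hy
  | succ k ih =>
      intro y hy
      have : (P ^ (k+1)).mulVec y = (P ^ k).mulVec (P.mulVec y) := by
        rw [Matrix.mulVec_mulVec, ← pow_succ]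
      rw [this]
      exact ih _ (hP y hy)

/-- For a closed convex cone `C`, the set `M(C)` is a closed convex cone in the space of
real `n × n` matrices. -/
theorem memM_isClosed_convex_cone {n : ℕ} (C : Set (Fin n → ℝ))
    (hclosed : IsClosed C) (hconv : Convex ℝ C)
    (hcone : ∀ x ∈ C, ∀ t : ℝ, 0 < t → t • x ∈ C) :
    IsClosed {A : Matrix (Fin n) (Fin n) ℝ | memM C A} ∧
    Convex ℝ {A : Matrix (Fin n) (Fin n) ℝ | memM C A} ∧
    (∀ A : Matrix (Fin n) (Fin n) ℝ, memM C A → ∀ s : ℝ, 0 ≤ s → memM C (s • A)) := by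
  refine ⟨?_, ?_, ?_⟩
  · -- closed
    have hset : {A : Matrix (Fin n) (Fin n) ℝ | memM C A} =
        ⋂ (t : ℝ) (_ : 0 ≤ t) (x : Fin n → ℝ) (_ : x ∈ C),
          {A : Matrix (Fin n) (Fin n) ℝ | (NormedSpace.exp (t • A)).mulVec x ∈ C} := by
      ext A
      simp [memM, Set.mem_iInter]
    rw [hset]
    refine isClosed_iInter fun t => isClosed_iInter fun ht => isClosed_iInter fun x =>
      isClosed_iInter fun hx => ?_
    have hcont : Continuous fun A : Matrix (Fin n) (Fin n) ℝ =>
        (NormedSpace.exp (t • A)).mulVec x := by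
      exact ((exp_continuous.comp (continuous_id.const_smul t)).matrix_mulVec
        continuous_const)
    exact IsClosed.preimage hcont hclosed
  · -- convex
    rintro A hA B hB a b ha hb hab
    intro t ht x hx
    set U : Matrix (Fin n) (Fin n) ℝ := (t * a) • A with hU_def
    set V : Matrix (Fin n) (Fin n) ℝ := (t * b) • B with hV_def
    have hUV : t • (a • A + b • B) = U + V := by
      rw [smul_add, smul_smul, smul_smul]
    rw [hUV]
    have htrot := aux_trotter U V
    have hcont : Continuous fun M : Matrix (Fin n) (Fin n) ℝ => M.mulVec x :=
      continuous_id.matrix_mulVec continuous_const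
    have hlim : Tendsto
        (fun k : ℕ => ((exp ((k:ℝ)⁻¹ • U) * exp ((k:ℝ)⁻¹ • V)) ^ k).mulVec x) atTop
        (𝓝 ((exp (U + V)).mulVec x)) :=
      ((hcont.tendsto _).comp htrot)
    refine hclosed.mem_of_tendsto hlim (Eventually.of_forall fun k => ?_)
    have hXmem : ∀ y ∈ C, (exp ((k:ℝ)⁻¹ • U) * exp ((k:ℝ)⁻¹ • V)).mulVec y ∈ C := by
      intro y hy
      have h1 : ((k:ℝ)⁻¹ • V) = ((k:ℝ)⁻¹ * (t * b)) • B := by rw [hV_def, smul_smul]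
      have h2 : ((k:ℝ)⁻¹ • U) = ((k:ℝ)⁻¹ * (t * a)) • A := by rw [hU_def, smul_smul]
      rw [← Matrix.mulVec_mulVec, h1, h2]
      refine hA _ (mul_nonneg (by positivity) (mul_nonneg ht ha)) _ ?_
      exact hB _ (mul_nonneg (by positivity) (mul_nonneg ht hb)) _ hy
    exact aux_pow_mulVec_mem C _ hXmem k x hx
  · -- cone
    intro A hA s hs t ht x hx
    have := hA (t * s) (mul_nonneg ht hs) x hx
    rwa [smul_smul]
end

section
/- Let C ⊆ ℝⁿ be a closed convex cone. Then M(C) is contained in the closure (in the space of real n×n matrices) of the set of all sums A₀ + A₁, where A₀ ranges over matrices such that exp(tA₀) maps C onto C for every t ∈ ℝ, and A₁ ranges over matrices with A₁(C) ⊆ C. -/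
open Matrix Pointwise

section Aux

attribute [local instance] Matrix.linftyOpNormedRing Matrix.linftyOpNormedAlgebra

lemma aux_tendsto {n : ℕ} (A : Matrix (Fin n) (Fin n) ℝ) :
    Filter.Tendsto
      (fun h : ℝ => (-h⁻¹) • (1 : Matrix (Fin n) (Fin n) ℝ)
        + h⁻¹ • NormedSpace.exp (h • A))
      (nhdsWithin 0 (Set.Ioi 0)) (nhds A) := by
  haveI : CompleteSpace (Matrix (Fin n) (Fin n) ℝ) := FiniteDimensional.complete ℝ _
  have hd : HasDerivAt (fun u : ℝ => NormedSpace.exp (u • A))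
      (NormedSpace.exp ((0:ℝ) • A) * A) 0 := hasDerivAt_exp_smul_const A 0
  have hd' : HasDerivAt (fun u : ℝ => NormedSpace.exp (u • A)) A 0 := by
    simpa [NormedSpace.exp_zero] using hd
  have := (hasDerivAt_iff_tendsto_slope.mp hd')
  have hmono : nhdsWithin (0:ℝ) (Set.Ioi 0) ≤ nhdsWithin (0:ℝ) {0}ᶜ :=
    nhdsWithin_mono _ (fun x hx => ne_of_gt hx)
  have h2 := this.mono_left hmono
  refine h2.congr (fun h => ?_)
  simp [slope_def_field, slope, vsub_eq_sub, NormedSpace.exp_zero, smul_sub,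
    sub_eq_add_neg, neg_smul, add_comm]

end Aux

/-- `M(C)` is contained in the closure of the set of sums `A₀ + A₁`, where `exp(tA₀)` maps `C`
onto `C` for all real `t` and `A₁` maps `C` into `C`. -/
theorem memM_subset_closure_sum {n : ℕ} (C : Set (Fin n → ℝ))
    (hclosed : IsClosed C) (hconv : Convex ℝ C)
    (hcone : ∀ x ∈ C, ∀ t : ℝ, 0 < t → t • x ∈ C) :
    {A : Matrix (Fin n) (Fin n) ℝ | memM C A} ⊆
      closure ({A₀ : Matrix (Fin n) (Fin n) ℝ |
                  ∀ t : ℝ, (NormedSpace.exp (t • A₀)).mulVec '' C = C} +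
               {A₁ : Matrix (Fin n) (Fin n) ℝ | ∀ x ∈ C, A₁.mulVec x ∈ C}) := by
  intro A hA
  -- scalar matrices are in the first set
  have hscal : ∀ c : ℝ, ∀ t : ℝ,
      (NormedSpace.exp (t • (c • (1 : Matrix (Fin n) (Fin n) ℝ)))).mulVec '' C = C := by
    intro c t
    have he : NormedSpace.exp (t • (c • (1 : Matrix (Fin n) (Fin n) ℝ)))
        = Real.exp (t * c) • (1 : Matrix (Fin n) (Fin n) ℝ) := by
      rw [smul_smul, Matrix.smul_one_eq_diagonal, Matrix.exp_diagonal,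
        Matrix.smul_one_eq_diagonal]
      simp [Pi.exp_def, Real.exp_eq_exp_ℝ]
    have hmv : ∀ y : Fin n → ℝ,
        (Real.exp (t * c) • (1 : Matrix (Fin n) (Fin n) ℝ)).mulVec y
          = Real.exp (t * c) • y := by
      intro y; rw [Matrix.smul_mulVec, Matrix.one_mulVec]
    rw [he]
    apply Set.Subset.antisymm
    · rintro _ ⟨x, hx, rfl⟩
      rw [hmv]
      exact hcone x hx _ (Real.exp_pos _)
    · intro y hy
      refine ⟨Real.exp (-(t * c)) • y, hcone y hy _ (Real.exp_pos _), ?_⟩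
      rw [hmv, smul_smul, ← Real.exp_add]
      simp
  -- elements of the approximating family lie in the sum set
  have hmem : ∀ h : ℝ, h ∈ Set.Ioi (0:ℝ) →
      (-h⁻¹) • (1 : Matrix (Fin n) (Fin n) ℝ) + h⁻¹ • NormedSpace.exp (h • A) ∈
        ({A₀ : Matrix (Fin n) (Fin n) ℝ |
            ∀ t : ℝ, (NormedSpace.exp (t • A₀)).mulVec '' C = C} +
         {A₁ : Matrix (Fin n) (Fin n) ℝ | ∀ x ∈ C, A₁.mulVec x ∈ C}) := by
    intro h hh
    have h0 : (0:ℝ) < h := hh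
    refine Set.add_mem_add ?_ ?_
    · show ∀ t : ℝ, _
      have : (-h⁻¹) • (1 : Matrix (Fin n) (Fin n) ℝ)
          = (-h⁻¹ : ℝ) • (1 : Matrix (Fin n) (Fin n) ℝ) := rfl
      exact hscal (-h⁻¹)
    · intro x hx
      rw [Matrix.smul_mulVec]
      exact hcone _ (hA h h0.le x hx) _ (by positivity)
  haveI : (nhdsWithin (0:ℝ) (Set.Ioi 0)).NeBot := nhdsGT_neBot 0
  exact mem_closure_of_tendsto (aux_tendsto A)
    (Filter.eventually_of_mem self_mem_nhdsWithin hmem)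
end

section
/- Let C ⊆ ℝⁿ be a closed convex cone. Then M(C) equals the closure (in the space of real n×n matrices) of the Minkowski sum L + E, where L is the set of matrices A₀ such that exp(tA₀) maps C onto C for every t ∈ ℝ, and E is the set of matrices A₁ with A₁(C) ⊆ C. -/
open Matrix Pointwise

section Aux

open Filter Topology Nat

variable {n : ℕ} {C : Set (Fin n → ℝ)}

private lemma cone_zero_mem (hclosed : IsClosed C)
    (hcone : ∀ x ∈ C, ∀ t : ℝ, 0 < t → t • x ∈ C) {x : Fin n → ℝ} (hx : x ∈ C) :
    (0 : Fin n → ℝ) ∈ C := by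
  have h : Tendsto (fun m : ℕ => (1 / ((m : ℝ) + 1)) • x) atTop (𝓝 (0 : Fin n → ℝ)) := by
    simpa using (tendsto_one_div_add_atTop_nhds_zero_nat (𝕜 := ℝ)).smul_const x
  exact hclosed.mem_of_tendsto h
    (Filter.Eventually.of_forall fun m => hcone x hx _ (by positivity))

private lemma cone_add_mem (hconv : Convex ℝ C)
    (hcone : ∀ x ∈ C, ∀ t : ℝ, 0 < t → t • x ∈ C) {x y : Fin n → ℝ}
    (hx : x ∈ C) (hy : y ∈ C) : x + y ∈ C := by
  have h : (1 / 2 : ℝ) • x + (1 / 2 : ℝ) • y ∈ C :=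
    hconv hx hy (by norm_num) (by norm_num) (by norm_num)
  have h2 := hcone _ h 2 (by norm_num)
  have : (2 : ℝ) • ((1 / 2 : ℝ) • x + (1 / 2 : ℝ) • y) = x + y := by
    rw [smul_add, smul_smul, smul_smul]; norm_num
  rwa [this] at h2

private lemma cone_smul_mem (hclosed : IsClosed C)
    (hcone : ∀ x ∈ C, ∀ t : ℝ, 0 < t → t • x ∈ C) {x : Fin n → ℝ}
    (hx : x ∈ C) {c : ℝ} (hc : 0 ≤ c) : c • x ∈ C := by
  rcases hc.lt_or_eq with h | h
  · exact hcone x hx c h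
  · rw [← h, zero_smul]
    exact cone_zero_mem hclosed hcone hx

private lemma pow_mulVec_mem {A₁ : Matrix (Fin n) (Fin n) ℝ}
    (hA₁ : ∀ x ∈ C, A₁.mulVec x ∈ C) :
    ∀ k : ℕ, ∀ x ∈ C, (A₁ ^ k).mulVec x ∈ C := by
  intro k
  induction k with
  | zero => intro x hx; simpa [Matrix.one_mulVec] using hx
  | succ k ih =>
    intro x hx
    rw [pow_succ, ← Matrix.mulVec_mulVec]
    exact ih _ (hA₁ x hx)

/-- `exp(s•A₁)` maps `C` into `C` whenever `A₁` does and `s ≥ 0`. -/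
private lemma exp_mem_E (hclosed : IsClosed C) (hconv : Convex ℝ C)
    (hcone : ∀ x ∈ C, ∀ t : ℝ, 0 < t → t • x ∈ C)
    {A₁ : Matrix (Fin n) (Fin n) ℝ} (hA₁ : ∀ x ∈ C, A₁.mulVec x ∈ C)
    {s : ℝ} (hs : 0 ≤ s) :
    ∀ x ∈ C, (NormedSpace.exp (s • A₁)).mulVec x ∈ C := by
  intro x hx
  have hsum : HasSum (fun m : ℕ => ((m ! : ℝ))⁻¹ • (s • A₁) ^ m)
      (NormedSpace.exp (s • A₁)) := by
    letI : SeminormedRing (Matrix (Fin n) (Fin n) ℝ) := Matrix.linftyOpSemiNormedRing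
    letI : NormedRing (Matrix (Fin n) (Fin n) ℝ) := Matrix.linftyOpNormedRing
    letI : NormedAlgebra ℝ (Matrix (Fin n) (Fin n) ℝ) := Matrix.linftyOpNormedAlgebra
    exact NormedSpace.exp_series_hasSum_exp' _
  have htend := hsum.tendsto_sum_nat
  have hcont : Continuous fun B : Matrix (Fin n) (Fin n) ℝ => B.mulVec x :=
    continuous_id.matrix_mulVec continuous_const
  have h2 : Tendsto (fun N => (∑ m ∈ Finset.range N,
        ((m ! : ℝ))⁻¹ • (s • A₁) ^ m).mulVec x) atTop
      (𝓝 ((NormedSpace.exp (s • A₁)).mulVec x)) :=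
    (hcont.tendsto _).comp htend
  refine hclosed.mem_of_tendsto h2 (Filter.Eventually.of_forall fun N => ?_)
  have key : ∀ N : ℕ, (∑ m ∈ Finset.range N,
      ((m ! : ℝ))⁻¹ • (s • A₁) ^ m).mulVec x ∈ C := by
    intro N
    induction N with
    | zero =>
      simpa [Matrix.zero_mulVec] using cone_zero_mem hclosed hcone hx
    | succ N ih =>
      rw [Finset.sum_range_succ, Matrix.add_mulVec]
      refine cone_add_mem hconv hcone ih ?_
      have : (((N ! : ℝ))⁻¹ • (s • A₁) ^ N).mulVec x
          = (((N ! : ℝ))⁻¹ * s ^ N) • ((A₁ ^ N).mulVec x) := by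
        rw [smul_pow, smul_smul, Matrix.smul_mulVec]
      rw [this]
      refine cone_smul_mem hclosed hcone (pow_mulVec_mem hA₁ N x hx) ?_
      positivity
  exact key N

private lemma exp_smul_one (c : ℝ) :
    NormedSpace.exp (c • (1 : Matrix (Fin n) (Fin n) ℝ))
      = Real.exp c • (1 : Matrix (Fin n) (Fin n) ℝ) := by
  have key : algebraMap ℝ (Matrix (Fin n) (Fin n) ℝ) (NormedSpace.exp c)
      = NormedSpace.exp (algebraMap ℝ (Matrix (Fin n) (Fin n) ℝ) c) := by
    letI : SeminormedRing (Matrix (Fin n) (Fin n) ℝ) := Matrix.linftyOpSemiNormedRing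
    letI : NormedRing (Matrix (Fin n) (Fin n) ℝ) := Matrix.linftyOpNormedRing
    letI : NormedAlgebra ℝ (Matrix (Fin n) (Fin n) ℝ) := Matrix.linftyOpNormedAlgebra
    exact NormedSpace.algebraMap_exp_comm c
  have h1 : c • (1 : Matrix (Fin n) (Fin n) ℝ) = algebraMap ℝ _ c :=
    (Algebra.algebraMap_eq_smul_one c).symm
  rw [h1, ← key, ← Real.exp_eq_exp_ℝ, Algebra.algebraMap_eq_smul_one]

/-- Every matrix of the form `c • 1 + A₁` with `A₁` mapping `C` into `C` is in `M(C)`. -/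
private lemma scalE_subset_M (hclosed : IsClosed C) (hconv : Convex ℝ C)
    (hcone : ∀ x ∈ C, ∀ t : ℝ, 0 < t → t • x ∈ C)
    {c : ℝ} {A₁ : Matrix (Fin n) (Fin n) ℝ} (hA₁ : ∀ x ∈ C, A₁.mulVec x ∈ C) :
    memM C (c • 1 + A₁) := by
  intro t ht x hx
  have h1 : t • (c • (1 : Matrix (Fin n) (Fin n) ℝ) + A₁)
      = (t * c) • (1 : Matrix (Fin n) (Fin n) ℝ) + t • A₁ := by
    rw [smul_add, smul_smul]
  have hcomm : Commute ((t * c) • (1 : Matrix (Fin n) (Fin n) ℝ)) (t • A₁) :=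
    ((Commute.one_left (t • A₁)).smul_left (t * c))
  rw [h1, Matrix.exp_add_of_commute _ _ hcomm, exp_smul_one]
  have h2 : ((Real.exp (t * c) • (1 : Matrix (Fin n) (Fin n) ℝ))
        * NormedSpace.exp (t • A₁)).mulVec x
      = Real.exp (t * c) • ((NormedSpace.exp (t • A₁)).mulVec x) := by
    rw [smul_mul_assoc, one_mul, Matrix.smul_mulVec]
  rw [h2]
  exact hcone _ (exp_mem_E hclosed hconv hcone hA₁ ht x hx) _ (Real.exp_pos _)

/-- `M(C)` is closed. -/
private lemma M_isClosed (hclosed : IsClosed C) :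
    IsClosed {A : Matrix (Fin n) (Fin n) ℝ | memM C A} := by
  have hset : {A : Matrix (Fin n) (Fin n) ℝ | memM C A}
      = ⋂ (t : ℝ), ⋂ (_ : 0 ≤ t), ⋂ (x : Fin n → ℝ), ⋂ (_ : x ∈ C),
          {A : Matrix (Fin n) (Fin n) ℝ | (NormedSpace.exp (t • A)).mulVec x ∈ C} := by
    ext A
    simp only [Set.mem_setOf_eq, Set.mem_iInter, memM]
  rw [hset]
  refine isClosed_iInter fun t => isClosed_iInter fun _ =>
    isClosed_iInter fun x => isClosed_iInter fun _ => ?_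
  have h1 : Continuous fun A : Matrix (Fin n) (Fin n) ℝ => NormedSpace.exp (t • A) := by
    letI : SeminormedRing (Matrix (Fin n) (Fin n) ℝ) := Matrix.linftyOpSemiNormedRing
    letI : NormedRing (Matrix (Fin n) (Fin n) ℝ) := Matrix.linftyOpNormedRing
    letI : NormedAlgebra ℝ (Matrix (Fin n) (Fin n) ℝ) := Matrix.linftyOpNormedAlgebra
    letI : NormedAlgebra ℚ (Matrix (Fin n) (Fin n) ℝ) := Matrix.linftyOpNormedAlgebra
    exact NormedSpace.exp_continuous.comp (continuous_const_smul t)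
  have hcont : Continuous fun A : Matrix (Fin n) (Fin n) ℝ =>
      (NormedSpace.exp (t • A)).mulVec x := h1.matrix_mulVec continuous_const
  exact hclosed.preimage hcont

/-- The approximation lemma: every element of `M(C)` lies in the closure of the set of
matrices of the form `c • 1 + A₁` with `A₁(C) ⊆ C`. -/
private lemma mem_closure_scalE (hcone : ∀ x ∈ C, ∀ t : ℝ, 0 < t → t • x ∈ C)
    {A : Matrix (Fin n) (Fin n) ℝ} (hA : memM C A) :
    A ∈ closure {B : Matrix (Fin n) (Fin n) ℝ | ∃ c : ℝ, ∃ A₁ : Matrix (Fin n) (Fin n) ℝ,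
      (∀ x ∈ C, A₁.mulVec x ∈ C) ∧ B = c • 1 + A₁} := by
  letI : SeminormedRing (Matrix (Fin n) (Fin n) ℝ) := Matrix.linftyOpSemiNormedRing
  letI : NormedRing (Matrix (Fin n) (Fin n) ℝ) := Matrix.linftyOpNormedRing
  letI : NormedAlgebra ℝ (Matrix (Fin n) (Fin n) ℝ) := Matrix.linftyOpNormedAlgebra
  have hd := hasDerivAt_exp_smul_const (𝕂 := ℝ) A (0 : ℝ)
  simp only [zero_smul, NormedSpace.exp_zero, one_mul] at hd
  rw [hasDerivAt_iff_tendsto_slope] at hd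
  have hseq : Tendsto (fun k : ℕ => ((k : ℝ))⁻¹) atTop (𝓝[≠] (0 : ℝ)) := by
    rw [tendsto_nhdsWithin_iff]
    constructor
    · simpa [one_div] using tendsto_one_div_atTop_nhds_zero_nat (𝕜 := ℝ)
    · filter_upwards [eventually_gt_atTop 0] with k hk
      simp only [Set.mem_compl_iff, Set.mem_singleton_iff]
      exact inv_ne_zero (Nat.cast_ne_zero.2 hk.ne')
  have htend := hd.comp hseq
  refine mem_closure_of_tendsto htend ?_
  filter_upwards [eventually_gt_atTop 0] with k hk
  have hkpos : (0 : ℝ) < (k : ℝ) := by exact_mod_cast hk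
  have hslope : slope (fun u : ℝ => NormedSpace.exp (u • A)) 0 ((k : ℝ)⁻¹)
      = (-(k : ℝ)) • (1 : Matrix (Fin n) (Fin n) ℝ)
        + (k : ℝ) • NormedSpace.exp (((k : ℝ))⁻¹ • A) := by
    rw [slope_def_module]
    rw [sub_zero, inv_inv, zero_smul, NormedSpace.exp_zero, smul_sub]
    rw [sub_eq_neg_add, neg_smul]
  refine ⟨-(k : ℝ), (k : ℝ) • NormedSpace.exp (((k : ℝ))⁻¹ • A), ?_, hslope⟩
  intro x hx
  rw [Matrix.smul_mulVec]
  exact hcone _ (hA ((k : ℝ))⁻¹ (by positivity) x hx) _ hkpos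

end Aux

/-- `M(C)` equals the closure of the Minkowski sum `L + E`, where `L` is the set of matrices
`A₀` with `exp(tA₀)` mapping `C` onto `C` for every real `t` and `E` is the set of matrices `A₁`
mapping `C` into `C`. -/
theorem memM_eq_closure_lieAut_add_end {n : ℕ} (C : Set (Fin n → ℝ))
    (hclosed : IsClosed C) (hconv : Convex ℝ C)
    (hcone : ∀ x ∈ C, ∀ t : ℝ, 0 < t → t • x ∈ C) :
    {A : Matrix (Fin n) (Fin n) ℝ | memM C A} =
      closure ({A₀ : Matrix (Fin n) (Fin n) ℝ |
                  ∀ t : ℝ, (NormedSpace.exp (t • A₀)).mulVec '' C = C} +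
               {A₁ : Matrix (Fin n) (Fin n) ℝ | ∀ x ∈ C, A₁.mulVec x ∈ C}) := by
  set L : Set (Matrix (Fin n) (Fin n) ℝ) :=
    {A₀ | ∀ t : ℝ, (NormedSpace.exp (t • A₀)).mulVec '' C = C} with hL
  set E : Set (Matrix (Fin n) (Fin n) ℝ) :=
    {A₁ | ∀ x ∈ C, A₁.mulVec x ∈ C} with hE
  set S : Set (Matrix (Fin n) (Fin n) ℝ) :=
    {B | ∃ c : ℝ, ∃ A₁ : Matrix (Fin n) (Fin n) ℝ,
      (∀ x ∈ C, A₁.mulVec x ∈ C) ∧ B = c • 1 + A₁} with hS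
  -- scalar multiples of the identity are in L
  have hsmul_one_L : ∀ c : ℝ, c • (1 : Matrix (Fin n) (Fin n) ℝ) ∈ L := by
    intro c t
    have h1 : t • (c • (1 : Matrix (Fin n) (Fin n) ℝ))
        = (t * c) • (1 : Matrix (Fin n) (Fin n) ℝ) := smul_smul t c 1
    rw [h1, exp_smul_one]
    ext y
    constructor
    · rintro ⟨z, hz, rfl⟩
      rw [Matrix.smul_mulVec, Matrix.one_mulVec]
      exact hcone z hz _ (Real.exp_pos _)
    · intro hy
      refine ⟨(Real.exp (t * c))⁻¹ • y, hcone y hy _ (by positivity), ?_⟩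
      rw [Matrix.smul_mulVec, Matrix.one_mulVec, smul_smul]
      rw [mul_inv_cancel₀ (Real.exp_ne_zero _), one_smul]
  have hSsub : S ⊆ L + E := by
    rintro B ⟨c, A₁, hA₁, rfl⟩
    exact Set.add_mem_add (hsmul_one_L c) hA₁
  apply Set.Subset.antisymm
  · intro A hA
    exact closure_mono hSsub (mem_closure_scalE hcone hA)
  · -- closure (L + E) ⊆ M
    have hSM : S ⊆ {A : Matrix (Fin n) (Fin n) ℝ | memM C A} := by
      rintro B ⟨c, A₁, hA₁, rfl⟩
      exact scalE_subset_M hclosed hconv hcone hA₁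
    have hclosure_S_M : closure S ⊆ {A : Matrix (Fin n) (Fin n) ℝ | memM C A} :=
      closure_minimal hSM (M_isClosed hclosed)
    have hLE_sub : L + E ⊆ closure S := by
      rintro B hB
      rw [Set.mem_add] at hB
      obtain ⟨A₀, hA₀, A₁, hA₁, rfl⟩ := hB
      -- A₀ ∈ M(C)
      have hA₀M : memM C A₀ := by
        intro t ht x hx
        rw [← hA₀ t]
        exact Set.mem_image_of_mem _ hx
      have hA₀cl : A₀ ∈ closure S := mem_closure_scalE hcone hA₀M
      have hmap : Set.MapsTo (fun z => z + A₁) S S := by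
        rintro z ⟨c, A₂, hA₂, rfl⟩
        refine ⟨c, A₂ + A₁, ?_, by show c • 1 + A₂ + A₁ = _; rw [add_assoc]⟩
        intro x hx
        rw [Matrix.add_mulVec]
        exact cone_add_mem hconv hcone (hA₂ x hx) (hA₁ x hx)
      have := map_mem_closure (continuous_add_right A₁) hA₀cl hmap
      exact this
    calc closure (L + E) ⊆ closure (closure S) := closure_mono hLE_sub
      _ = closure S := closure_closure
      _ ⊆ _ := hclosure_S_M
end

section
/- Let C ⊆ ℝⁿ be a closed convex cone and let A be a real n×n matrix. Then exp(tA) maps C into C for every t ∈ ℝ if and only if for all x ∈ C and ξ ∈ C^∨ with ⟨x, ξ⟩ = 0 one has ⟨Ax, ξ⟩ = 0. -/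
open Matrix
open Metric Set Filter NormedSpace
open scoped Topology InnerProductSpace

attribute [local instance] Matrix.linftyOpNormedRing Matrix.linftyOpNormedAlgebra

theorem aux_deriv {n : ℕ} (A : Matrix (Fin n) (Fin n) ℝ) (x : Fin n → ℝ) (t : ℝ) :
    HasDerivAt (fun s : ℝ => (exp (s • A)).mulVec x)
      (A.mulVec ((exp (t • A)).mulVec x)) t := by
  have h := hasDerivAt_exp_smul_const' (𝕂 := ℝ) A t
  let g : Matrix (Fin n) (Fin n) ℝ →ₗ[ℝ] (Fin n → ℝ) :=
    { toFun := fun M => M.mulVec x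
      map_add' := fun M N => Matrix.add_mulVec M N x
      map_smul' := fun c M => Matrix.smul_mulVec c M x }
  have hg := (g.toContinuousLinearMap.hasFDerivAt (x := exp (t • A))).comp_hasDerivAt t h
  have : g.toContinuousLinearMap (A * exp (t • A)) = A.mulVec ((exp (t • A)).mulVec x) := by
    show (A * exp (t • A)).mulVec x = _
    rw [← Matrix.mulVec_mulVec]
  rw [← this]
  exact hg

theorem aux_tangent {E : Type*} [NormedAddCommGroup E] [InnerProductSpace ℝ E] [CompleteSpace E]
    (D : Set E) (hconv : Convex ℝ D) (hcone : ∀ v ∈ D, ∀ t : ℝ, 0 < t → t • v ∈ D)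
    (p w : E) (hp : p ∈ D)
    (hw : ∀ ν : E, (∀ c ∈ D, 0 ≤ ⟪c, ν⟫_ℝ) → ⟪p, ν⟫_ℝ = 0 → ⟪w, ν⟫_ℝ = 0)
    {ε : ℝ} (hε : 0 < ε) :
    ∃ (μ : ℝ) (c : E), 0 < μ ∧ c ∈ D ∧ ‖w - μ • (c - p)‖ < ε := by
  have hDp : Convex ℝ ((fun z => -p + z) '' D) := hconv.translate (-p)
  set S : ConvexCone ℝ E := hDp.toCone _ with hS
  set K : ConvexCone ℝ E := S.closure with hK
  have hKS : (K : Set E) = closure (S : Set E) := S.coe_closure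
  have h0S : (0 : E) ∈ (S : Set E) := by
    apply Convex.subset_toCone
    exact ⟨p, hp, by simp⟩
  have hwK : w ∈ (K : Set E) := by
    by_contra hwn
    obtain ⟨ν, hν1, hν2⟩ : ∃ ν, (∀ x ∈ (K : Set E), 0 ≤ ⟪x, ν⟫_ℝ) ∧ ⟪ν, w⟫_ℝ < 0 := by
      have hK0 : K.Pointed := by
        show (0 : E) ∈ (K : Set E)
        rw [hKS]; exact subset_closure h0S
      obtain ⟨ν, h1, h2⟩ := ProperCone.hyperplane_separation' (x₀ := w)
        (⟨K.toPointedCone hK0, by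
          show IsClosed (K : Set E)
          rw [hKS]; exact isClosed_closure⟩ : ProperCone ℝ E) hwn
      exact ⟨ν, fun x hx => h1 x hx, by rwa [real_inner_comm] at h2⟩
    have hcp : ∀ c ∈ D, 0 ≤ ⟪c - p, ν⟫_ℝ := by
      intro c hc
      refine hν1 _ ?_
      show c - p ∈ (K : Set E)
      rw [hKS]
      apply subset_closure
      apply Convex.subset_toCone
      exact ⟨c, hc, by abel⟩
    have hp2 : 0 ≤ ⟪p, ν⟫_ℝ := by
      have := hcp ((2:ℝ) • p) (hcone p hp 2 (by norm_num))
      have h2 : (2:ℝ) • p - p = p := by module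
      rwa [h2] at this
    have hp3 : ⟪p, ν⟫_ℝ ≤ 0 := by
      have := hcp (((2:ℝ)⁻¹) • p) (hcone p hp ((2:ℝ)⁻¹) (by norm_num))
      have h2 : ((2:ℝ)⁻¹) • p - p = ((-(2:ℝ)⁻¹)) • p := by module
      rw [h2, inner_smul_left] at this
      simp only [RCLike.star_def, conj_trivial] at this
      nlinarith
    have hp0 : ⟪p, ν⟫_ℝ = 0 := le_antisymm hp3 hp2
    have hdual : ∀ c ∈ D, 0 ≤ ⟪c, ν⟫_ℝ := by
      intro c hc
      have := hcp c hc
      rw [inner_sub_left, hp0] at this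
      linarith
    have := hw ν hdual hp0
    rw [real_inner_comm] at hν2
    linarith
  rw [hKS, Metric.mem_closure_iff] at hwK
  obtain ⟨b, hbS, hb⟩ := hwK ε hε
  obtain ⟨μ, hμ, y, hy, hyb⟩ := hDp.mem_toCone.mp hbS
  obtain ⟨c, hc, rfl⟩ := hy
  refine ⟨μ, c, hμ, hc, ?_⟩
  rw [dist_eq_norm] at hb
  simp only [] at hyb
  rw [show μ • ((fun z => -p + z) c) = μ • (c - p) by
    simp only []; rw [neg_add_eq_sub]] at hyb
  rwa [hyb]

theorem aux_invariance {E : Type*} [NormedAddCommGroup E] [InnerProductSpace ℝ E]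
    [CompleteSpace E]
    (D : Set E) (hD : IsClosed D) (hconv : Convex ℝ D) (L : E →L[ℝ] E)
    (y : ℝ → E) (hy : ∀ t, HasDerivAt y (L (y t)) t) (h0 : y 0 ∈ D)
    (htan : ∀ p ∈ D, ∀ ε > 0, ∃ (μ : ℝ) (c : E), 0 < μ ∧ c ∈ D ∧ ‖L p - μ • (c - p)‖ < ε)
    (T : ℝ) (hT : 0 ≤ T) : y T ∈ D := by
  have hne : D.Nonempty := ⟨y 0, h0⟩
  set f : ℝ → ℝ := fun t => infDist (y t) D with hf
  have hycont : Continuous y := by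
    rw [continuous_iff_continuousAt]; exact fun t => (hy t).continuousAt
  have hfc : Continuous f := (continuous_infDist_pt D).comp hycont
  set K : ℝ := ‖L‖ with hKdef
  have hslope : ∀ t ∈ Ico (0:ℝ) T, ∀ r, K * f t < r →
      ∃ᶠ z in 𝓝[>] t, (z - t)⁻¹ * (f z - f t) < r := by
    intro t _ r hr
    obtain ⟨p, hpD, hpdist⟩ := exists_norm_eq_iInf_of_complete_convex hne hD.isComplete hconv (y t)
    have hpf : ‖y t - p‖ = f t := by
      rw [hpdist]
      show (⨅ w : D, ‖y t - (w:E)‖) = infDist (y t) D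
      rw [infDist_eq_iInf]
      simp_rw [dist_eq_norm]
    set ε1 : ℝ := (r - K * f t) / 3 with hε1
    have hε1pos : 0 < ε1 := by rw [hε1]; linarith
    obtain ⟨μ, c, hμ, hcD, happrox⟩ := htan p hpD ε1 hε1pos
    have hslope2 : ∀ᶠ z in 𝓝[>] t, ‖slope y t z - L (y t)‖ < ε1 := by
      have h1 := hasDerivAt_iff_tendsto_slope.mp (hy t)
      have h2 : Tendsto (slope y t) (𝓝[>] t) (𝓝 (L (y t))) :=
        h1.mono_left (nhdsWithin_mono _ (fun z hz => ne_of_gt hz))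
      have h3 := h2 (ball_mem_nhds _ hε1pos)
      filter_upwards [h3] with z hz
      rwa [mem_preimage, mem_ball, dist_eq_norm] at hz
    have hsmall : ∀ᶠ z in 𝓝[>] t, z < t + μ⁻¹ := by
      apply eventually_nhdsWithin_of_eventually_nhds
      exact Filter.Tendsto.eventually_lt_const (by linarith [inv_pos.mpr hμ]) tendsto_id
    refine ((hslope2.and (hsmall.and eventually_mem_nhdsWithin)).mono ?_).frequently
    rintro z ⟨hz1, hz2, hz3⟩
    have hzt : t < z := hz3
    set s : ℝ := z - t with hs
    have hspos : 0 < s := by rw [hs]; linarith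
    have hsμ1 : s * μ < 1 := by
      have : s < μ⁻¹ := by rw [hs]; linarith
      calc s * μ < μ⁻¹ * μ := by apply mul_lt_mul_of_pos_right this hμ
      _ = 1 := inv_mul_cancel₀ (ne_of_gt hμ)
    set q : E := p + s • (μ • (c - p)) with hq
    have hqD : q ∈ D := by
      have heq : q = (1 - s * μ) • p + (s * μ) • c := by rw [hq]; module
      rw [heq]
      exact hconv hpD hcD (by nlinarith) (by positivity) (by ring)
    have hfzq : f z ≤ ‖y z - q‖ := by
      have := infDist_le_dist_of_mem (x := y z) hqD
      rwa [dist_eq_norm] at this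
    have hdecomp : y z - q = (y z - y t - s • L (y t)) + (y t - p)
        + s • (L (y t) - L p) + s • (L p - μ • (c - p)) := by
      rw [hq]; module
    have hterm1 : ‖y z - y t - s • L (y t)‖ = s * ‖slope y t z - L (y t)‖ := by
      rw [show y z - y t - s • L (y t) = s • (slope y t z - L (y t)) by
        rw [smul_sub, slope_def_module, hs, smul_smul,
          mul_inv_cancel₀ (ne_of_gt hspos), one_smul]]
      rw [norm_smul, Real.norm_eq_abs, abs_of_pos hspos]
    have hterm2 : ‖L (y t) - L p‖ ≤ K * f t := by
      rw [← map_sub]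
      calc ‖L (y t - p)‖ ≤ ‖L‖ * ‖y t - p‖ := L.le_opNorm _
      _ = K * f t := by rw [hpf]
    have hbound : f z - f t ≤ s * ‖slope y t z - L (y t)‖ + s * (K * f t) + s * ε1 := by
      have h4 : ‖y z - q‖ ≤ s * ‖slope y t z - L (y t)‖ + f t + s * (K * f t) + s * ε1 := by
        rw [hdecomp]
        calc ‖y z - y t - s • L (y t) + (y t - p) + s • (L (y t) - L p)
            + s • (L p - μ • (c - p))‖
            ≤ ‖y z - y t - s • L (y t) + (y t - p) + s • (L (y t) - L p)‖
              + ‖s • (L p - μ • (c - p))‖ := norm_add_le _ _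
        _ ≤ (‖y z - y t - s • L (y t) + (y t - p)‖ + ‖s • (L (y t) - L p)‖)
              + ‖s • (L p - μ • (c - p))‖ := by gcongr; exact norm_add_le _ _
        _ ≤ ((‖y z - y t - s • L (y t)‖ + ‖y t - p‖) + ‖s • (L (y t) - L p)‖)
              + ‖s • (L p - μ • (c - p))‖ := by gcongr; exact norm_add_le _ _
        _ ≤ s * ‖slope y t z - L (y t)‖ + f t + s * (K * f t) + s * ε1 := by
            rw [hterm1, hpf, norm_smul, norm_smul, Real.norm_eq_abs, abs_of_pos hspos]
            have h5 : s * ‖L (y t) - L p‖ ≤ s * (K * f t) := by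
              apply mul_le_mul_of_nonneg_left hterm2 (le_of_lt hspos)
            have h6 : s * ‖L p - μ • (c - p)‖ ≤ s * ε1 := by
              apply mul_le_mul_of_nonneg_left (le_of_lt happrox) (le_of_lt hspos)
            linarith
      linarith [hfzq.trans h4]
    have hfinal : f z - f t < s * r := by
      have h7 : s * ‖slope y t z - L (y t)‖ < s * ε1 :=
        mul_lt_mul_of_pos_left hz1 hspos
      have h8 : s * ε1 + s * (K * f t) + s * ε1 < s * r := by
        have : ε1 + K * f t + ε1 < r := by rw [hε1]; linarith
        calc s * ε1 + s * (K * f t) + s * ε1 = s * (ε1 + K * f t + ε1) := by ring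
        _ < s * r := mul_lt_mul_of_pos_left this hspos
      linarith
    rw [show (z - t)⁻¹ = s⁻¹ by rw [hs]]
    rw [inv_mul_lt_iff₀ hspos]
    linarith [hfinal]
  have hgron := le_gronwallBound_of_liminf_deriv_right_le (f := f) (f' := fun t => K * f t)
    (δ := 0) (K := K) (ε := 0) (a := 0) (b := T) hfc.continuousOn hslope
    (by simp [hf, infDist_zero_of_mem h0]) (fun x _ => by simp)
  have hT2 := hgron T (by constructor <;> linarith)
  rw [gronwallBound_ε0] at hT2
  simp only [zero_mul] at hT2
  have hfT : f T = 0 := le_antisymm hT2 infDist_nonneg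
  exact (hD.mem_iff_infDist_zero hne).mpr hfT

theorem aux_half {n : ℕ} (C : Set (Fin n → ℝ))
    (hclosed : IsClosed C) (hconv : Convex ℝ C)
    (hcone : ∀ x ∈ C, ∀ t : ℝ, 0 < t → t • x ∈ C)
    (A : Matrix (Fin n) (Fin n) ℝ)
    (H : ∀ x ∈ C, ∀ ξ ∈ dualCone C, x ⬝ᵥ ξ = 0 → A.mulVec x ⬝ᵥ ξ = 0) :
    ∀ t : ℝ, 0 ≤ t → ∀ x ∈ C, (exp (t • A)).mulVec x ∈ C := by
  intro t ht x hx
  set φ : EuclideanSpace ℝ (Fin n) ≃L[ℝ] (Fin n → ℝ) := EuclideanSpace.equiv (Fin n) ℝ with hφ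
  have happ : ∀ (w : EuclideanSpace ℝ (Fin n)) (i : Fin n), φ w i = w i := fun w i => rfl
  have hinner : ∀ u v : EuclideanSpace ℝ (Fin n), ⟪u, v⟫_ℝ = (φ u) ⬝ᵥ (φ v) := by
    intro u v
    rw [PiLp.inner_apply, dotProduct]
    simp [happ, RCLike.inner_apply, conj_trivial]
    exact Finset.sum_congr rfl fun i _ => mul_comm _ _
  set D : Set (EuclideanSpace ℝ (Fin n)) := φ ⁻¹' C with hD
  have hDclosed : IsClosed D := hclosed.preimage φ.continuous
  have hDconv : Convex ℝ D := by
    intro a ha b hb ta tb hta htb htab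
    show φ (ta • a + tb • b) ∈ C
    rw [map_add, φ.map_smul, φ.map_smul]
    exact hconv ha hb hta htb htab
  have hDcone : ∀ v ∈ D, ∀ s : ℝ, 0 < s → s • v ∈ D := by
    intro v hv s hs
    show φ (s • v) ∈ C
    rw [_root_.map_smul]
    exact hcone _ hv s hs
  set L : EuclideanSpace ℝ (Fin n) →L[ℝ] EuclideanSpace ℝ (Fin n) :=
    ((φ.symm : (Fin n → ℝ) →L[ℝ] EuclideanSpace ℝ (Fin n)).comp
      (A.mulVecLin.toContinuousLinearMap.comp (φ : EuclideanSpace ℝ (Fin n) →L[ℝ] (Fin n → ℝ)))) with hL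
  have hLapp : ∀ v : EuclideanSpace ℝ (Fin n), L v = φ.symm (A.mulVec (φ v)) := by
    intro v; simp [hL]
  set y : ℝ → EuclideanSpace ℝ (Fin n) := fun s => φ.symm ((exp (s • A)).mulVec x) with hy
  have hyderiv : ∀ s : ℝ, HasDerivAt y (L (y s)) s := by
    intro s
    have h1 := ((φ.symm : (Fin n → ℝ) →L[ℝ] EuclideanSpace ℝ (Fin n)).hasFDerivAt).comp_hasDerivAt s (aux_deriv A x s)
    have h2 : L (y s) = φ.symm (A.mulVec ((exp (s • A)).mulVec x)) := by
      rw [hLapp, hy]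
      simp
    rw [h2]
    exact h1
  have h0 : y 0 ∈ D := by
    show φ (y 0) ∈ C
    rw [hy]
    simp only [zero_smul, exp_zero, Matrix.one_mulVec]
    simpa using hx
  have htan : ∀ p ∈ D, ∀ ε > 0,
      ∃ (μ : ℝ) (c : EuclideanSpace ℝ (Fin n)), 0 < μ ∧ c ∈ D ∧ ‖L p - μ • (c - p)‖ < ε := by
    intro p hp ε hε
    apply aux_tangent D hDconv hDcone p (L p) hp _ hε
    intro ν h1 h2
    set ξ : Fin n → ℝ := φ ν with hξ
    have hξdual : ξ ∈ dualCone C := by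
      intro x' hx'
      have hm : φ.symm x' ∈ D := by
        show φ (φ.symm x') ∈ C
        rwa [φ.apply_symm_apply]
      have := h1 (φ.symm x') hm
      rwa [hinner, φ.apply_symm_apply] at this
    have hp0 : (φ p) ⬝ᵥ ξ = 0 := by rw [← hinner]; exact h2
    have := H (φ p) hp ξ hξdual hp0
    rw [hinner, hLapp, φ.apply_symm_apply]
    exact this
  have := aux_invariance D hDclosed hDconv L y hyderiv h0 htan t ht
  have h3 : φ (y t) ∈ C := this
  rwa [hy, φ.apply_symm_apply] at h3

/-- `exp(tA)` maps `C` into `C` for every real `t` iff for all `x ∈ C` and `ξ ∈ C^∨` with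
`⟨x, ξ⟩ = 0` one has `⟨Ax, ξ⟩ = 0`. -/
theorem exp_mapsTo_forall_real_iff {n : ℕ} (C : Set (Fin n → ℝ))
    (hclosed : IsClosed C) (hconv : Convex ℝ C)
    (hcone : ∀ x ∈ C, ∀ t : ℝ, 0 < t → t • x ∈ C)
    (A : Matrix (Fin n) (Fin n) ℝ) :
    (∀ t : ℝ, ∀ x ∈ C, (NormedSpace.exp (t • A)).mulVec x ∈ C) ↔
      (∀ x ∈ C, ∀ ξ ∈ dualCone C, x ⬝ᵥ ξ = 0 → A.mulVec x ⬝ᵥ ξ = 0) := by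
  constructor
  · intro hmaps x hx ξ hξ hx0
    let g : (Fin n → ℝ) →ₗ[ℝ] ℝ :=
      { toFun := fun w => w ⬝ᵥ ξ
        map_add' := fun a b => add_dotProduct a b ξ
        map_smul' := fun c a => smul_dotProduct c a ξ }
    have hf : HasDerivAt (fun s : ℝ => (exp (s • A)).mulVec x ⬝ᵥ ξ)
        (A.mulVec ((exp ((0:ℝ) • A)).mulVec x) ⬝ᵥ ξ) 0 :=
      (g.toContinuousLinearMap.hasFDerivAt).comp_hasDerivAt 0 (aux_deriv A x 0)
    have h0 : (exp ((0:ℝ) • A)).mulVec x = x := by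
      rw [zero_smul, exp_zero, Matrix.one_mulVec]
    rw [h0] at hf
    have hmin : IsLocalMin (fun s : ℝ => (exp (s • A)).mulVec x ⬝ᵥ ξ) 0 := by
      apply Filter.Eventually.of_forall
      intro s
      simp only [zero_smul, exp_zero, Matrix.one_mulVec, hx0]
      exact hξ _ (hmaps s x hx)
    exact hmin.hasDerivAt_eq_zero hf
  · intro H t x hx
    rcases le_or_gt 0 t with ht | ht
    · exact aux_half C hclosed hconv hcone A H t ht x hx
    · have H' : ∀ x ∈ C, ∀ ξ ∈ dualCone C, x ⬝ᵥ ξ = 0 → (-A).mulVec x ⬝ᵥ ξ = 0 := by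
        intro x' hx' ξ hξ h0
        rw [Matrix.neg_mulVec, neg_dotProduct, H x' hx' ξ hξ h0, neg_zero]
      have := aux_half C hclosed hconv hcone (-A) H' (-t) (by linarith) x hx
      rwa [show (-t) • (-A) = t • A by rw [neg_smul_neg]] at this
end

section
/- Let C ⊆ ℝⁿ be a proper cone. Suppose A ∈ M(C) is Hurwitz, and D₁, D₂ are invertible real n×n matrices with D₁(C) = C and D₂(C) = C. If D₁AD₂ ∈ M(C), then D₁AD₂ is Hurwitz. -/
open Matrix NormedSpace Filter Topology

/-- A real square matrix is Hurwitz if all its eigenvalues (as a complex matrix) have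
negative real part. -/
def IsHurwitz {n : ℕ} (A : Matrix (Fin n) (Fin n) ℝ) : Prop :=
  ∀ μ ∈ spectrum ℂ (A.map (fun a => (a : ℂ))), μ.re < 0

section Aux
variable {N : ℕ}

variable {𝔸 : Type*} [RCLike 𝔸]

/-- exp of a matrix applied to a vector, as a tsum. -/
theorem exp_mulVec_tsum (M : Matrix (Fin N) (Fin N) 𝔸) (x : Fin N → 𝔸) :
    (exp M).mulVec x = ∑' k : ℕ, (((Nat.factorial k : ℕ) : ℝ)⁻¹ • ((M ^ k).mulVec x)) := by
  letI : SeminormedRing (Matrix (Fin N) (Fin N) 𝔸) := Matrix.linftyOpSemiNormedRing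
  letI : NormedRing (Matrix (Fin N) (Fin N) 𝔸) := Matrix.linftyOpNormedRing
  letI : NormedAlgebra ℝ (Matrix (Fin N) (Fin N) 𝔸) := Matrix.linftyOpNormedAlgebra
  let L : Matrix (Fin N) (Fin N) 𝔸 →ₗ[ℝ] (Fin N → 𝔸) :=
    { toFun := fun M => M.mulVec x
      map_add' := fun M₁ M₂ => Matrix.add_mulVec _ _ _
      map_smul' := fun r M => Matrix.smul_mulVec r M x }
  have hL : Continuous L := LinearMap.continuous_of_finiteDimensional L
  have hs : HasSum (fun k : ℕ => (((Nat.factorial k : ℕ) : ℝ)⁻¹ • M ^ k)) (exp M) := by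
    rw [exp_eq_tsum ℝ]
    exact (expSeries_summable' (𝕂 := ℝ) M).hasSum
  have := (hs.map L.toAddMonoidHom hL).tsum_eq
  simpa [L, Matrix.smul_mulVec] using this.symm

/-- exp applied to an eigenvector. -/
theorem exp_mulVec_eigen (M : Matrix (Fin N) (Fin N) ℂ) (z : Fin N → ℂ) (μ : ℂ)
    (h : M.mulVec z = μ • z) : (exp M).mulVec z = Complex.exp μ • z := by
  have hk : ∀ k : ℕ, (M ^ k).mulVec z = μ ^ k • z := by
    intro k
    induction k with
    | zero => simp [Matrix.one_mulVec]
    | succ k ih =>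
      rw [pow_succ', ← Matrix.mulVec_mulVec, ih, Matrix.mulVec_smul, h, smul_smul, ← pow_succ]
  rw [exp_mulVec_tsum]
  have hterm : ∀ k : ℕ, ((Nat.factorial k : ℕ) : ℝ)⁻¹ • ((M ^ k).mulVec z)
      = (((Nat.factorial k : ℕ) : ℝ)⁻¹ • μ ^ k) • z := by
    intro k; rw [hk k, smul_assoc]
  simp_rw [hterm]
  rw [(expSeries_summable' (𝕂 := ℝ) (𝔸 := ℂ) μ).tsum_smul_const]
  congr 1
  have h1 : exp μ = ∑' (k : ℕ), ((Nat.factorial k : ℕ) : ℝ)⁻¹ • μ ^ k :=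
    congrFun (exp_eq_tsum (𝕂 := ℝ) (𝔸 := ℂ)) μ
  rw [← h1, ← Complex.exp_eq_exp_ℂ]

theorem exp_smul_one_complex (c : ℂ) :
    exp (c • (1 : Matrix (Fin N) (Fin N) ℂ)) = Complex.exp c • (1 : Matrix (Fin N) (Fin N) ℂ) := by
  letI : SeminormedRing (Matrix (Fin N) (Fin N) ℂ) := Matrix.linftyOpSemiNormedRing
  letI : NormedRing (Matrix (Fin N) (Fin N) ℂ) := Matrix.linftyOpNormedRing
  letI : NormedAlgebra ℝ (Matrix (Fin N) (Fin N) ℂ) := Matrix.linftyOpNormedAlgebra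
  letI : NormedAlgebra ℚ (Matrix (Fin N) (Fin N) ℂ) := Matrix.linftyOpNormedAlgebra
  letI : NormedAlgebra ℂ (Matrix (Fin N) (Fin N) ℂ) := Matrix.linftyOpNormedAlgebra
  have h := map_exp (algebraMap ℂ (Matrix (Fin N) (Fin N) ℂ)) (continuous_algebraMap _ _) c
  rw [Algebra.algebraMap_eq_smul_one, Algebra.algebraMap_eq_smul_one] at h
  rw [Complex.exp_eq_exp_ℂ]; exact h.symm

theorem exp_smul_one_real (c : ℝ) :
    exp (c • (1 : Matrix (Fin N) (Fin N) ℝ)) = Real.exp c • (1 : Matrix (Fin N) (Fin N) ℝ) := by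
  letI : SeminormedRing (Matrix (Fin N) (Fin N) ℝ) := Matrix.linftyOpSemiNormedRing
  letI : NormedRing (Matrix (Fin N) (Fin N) ℝ) := Matrix.linftyOpNormedRing
  letI : NormedAlgebra ℝ (Matrix (Fin N) (Fin N) ℝ) := Matrix.linftyOpNormedAlgebra
  letI : NormedAlgebra ℚ (Matrix (Fin N) (Fin N) ℝ) := Matrix.linftyOpNormedAlgebra
  have h := map_exp (algebraMap ℝ (Matrix (Fin N) (Fin N) ℝ)) (continuous_algebraMap _ _) c
  rw [Algebra.algebraMap_eq_smul_one, Algebra.algebraMap_eq_smul_one] at h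
  rw [Real.exp_eq_exp_ℝ]; exact h.symm

theorem exp_map_ofReal (M : Matrix (Fin N) (Fin N) ℝ) :
    (exp M).map (fun a => (a : ℂ)) = exp (M.map (fun a => (a : ℂ))) := by
  letI : SeminormedRing (Matrix (Fin N) (Fin N) ℝ) := Matrix.linftyOpSemiNormedRing
  letI : NormedRing (Matrix (Fin N) (Fin N) ℝ) := Matrix.linftyOpNormedRing
  letI : NormedAlgebra ℝ (Matrix (Fin N) (Fin N) ℝ) := Matrix.linftyOpNormedAlgebra
  letI : NormedAlgebra ℚ (Matrix (Fin N) (Fin N) ℝ) := Matrix.linftyOpNormedAlgebra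
  letI : SeminormedRing (Matrix (Fin N) (Fin N) ℂ) := Matrix.linftyOpSemiNormedRing
  letI : NormedRing (Matrix (Fin N) (Fin N) ℂ) := Matrix.linftyOpNormedRing
  letI : NormedAlgebra ℝ (Matrix (Fin N) (Fin N) ℂ) := Matrix.linftyOpNormedAlgebra
  letI : NormedAlgebra ℚ (Matrix (Fin N) (Fin N) ℂ) := Matrix.linftyOpNormedAlgebra
  have hc : Continuous (fun M : Matrix (Fin N) (Fin N) ℝ => M.map (fun a => (a : ℂ))) :=
    Continuous.matrix_map continuous_id Complex.continuous_ofReal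
  exact map_exp (Complex.ofRealHom.mapMatrix) hc M

theorem tendsto_pow_mul_exp_neg' {c : ℝ} (hc : c < 0) (j : ℕ) :
    Tendsto (fun t : ℝ => t ^ j * Real.exp (c * t)) atTop (𝓝 0) := by
  have h2 : Tendsto (fun t : ℝ => (-c) * t) atTop atTop :=
    Tendsto.const_mul_atTop (by linarith) tendsto_id
  have h3 := (Real.tendsto_pow_mul_exp_neg_atTop_nhds_zero j).comp h2
  have h4 := h3.const_mul (((-c)⁻¹) ^ j)
  rw [mul_zero] at h4
  refine h4.congr fun t => ?_
  simp only [Function.comp_apply]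
  rw [show Real.exp (-(-c * t)) = Real.exp (c * t) by congr 1; ring]
  have hne : (-c) ≠ 0 := by linarith
  field_simp
  rw [← mul_pow, neg_mul_neg, one_div, ← mul_assoc, inv_mul_cancel₀ (by linarith : c ≠ 0), one_mul]

theorem decay_complex (M : Matrix (Fin N) (Fin N) ℝ)
    (hM : ∀ μ ∈ spectrum ℂ (M.map (fun a => (a : ℂ))), μ.re < 0) (v : Fin N → ℂ) :
    Tendsto (fun t : ℝ => (exp (t • (M.map (fun a => (a : ℂ))))).mulVec v) atTop (𝓝 0) := by
  letI : SeminormedRing (Matrix (Fin N) (Fin N) ℂ) := Matrix.linftyOpSemiNormedRing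
  letI : NormedRing (Matrix (Fin N) (Fin N) ℂ) := Matrix.linftyOpNormedRing
  letI : NormedAlgebra ℝ (Matrix (Fin N) (Fin N) ℂ) := Matrix.linftyOpNormedAlgebra
  letI : NormedAlgebra ℚ (Matrix (Fin N) (Fin N) ℂ) := Matrix.linftyOpNormedAlgebra
  set Ac := M.map (fun a => (a : ℂ)) with hAc
  set f := Matrix.toLinAlgEquiv' Ac with hf
  have htop := Module.End.iSup_maxGenEigenspace_eq_top (K := ℂ) f
  have hv : v ∈ ⨆ μ, Module.End.maxGenEigenspace f μ := by rw [htop]; trivial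
  refine Submodule.iSup_induction (motive := fun u => Tendsto (fun t : ℝ => (exp (t • Ac)).mulVec u) atTop (𝓝 0)) _ hv ?_ ?_ ?_
  · -- elements of generalized eigenspaces
    intro μ w hw
    rcases eq_or_ne w 0 with rfl | hw0
    · exact (tendsto_const_nhds : Tendsto (fun _ : ℝ => (0 : Fin N → ℂ)) atTop _).congr
        fun t => (Matrix.mulVec_zero _).symm
    obtain ⟨k, hk⟩ := (Module.End.mem_maxGenEigenspace f μ w).1 hw
    -- μ is an eigenvalue
    have hkne : k ≠ 0 := by
      rintro rfl; simp at hk; exact hw0 hk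
    have hgen : Module.End.HasGenEigenvalue f μ k := by
      rw [Module.End.hasGenEigenvalue_iff]
      intro hbot
      have : w ∈ Module.End.genEigenspace f μ k := by
        rw [Module.End.mem_genEigenspace_nat]; exact hk
      rw [hbot] at this
      exact hw0 (Submodule.mem_bot ℂ |>.1 this)
    have hspec : μ ∈ spectrum ℂ Ac := by
      have h1 : μ ∈ spectrum ℂ f :=
        (Module.End.hasEigenvalue_of_hasGenEigenvalue hgen).mem_spectrum
      rwa [AlgEquiv.spectrum_eq Matrix.toLinAlgEquiv' Ac] at h1
    have hre : μ.re < 0 := hM μ hspec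
    -- matrix form of nilpotency
    set Nm := Ac - μ • (1 : Matrix (Fin N) (Fin N) ℂ) with hNmdef
    have hNk : (Nm ^ k).mulVec w = 0 := by
      have h2 : Matrix.toLinAlgEquiv' (Nm ^ k) = (f - μ • 1) ^ k := by
        rw [map_pow, map_sub, _root_.map_smul, _root_.map_one, hf]
      rw [← h2] at hk
      simp only [Matrix.toLinAlgEquiv'_apply] at hk
      exact hk
    have hNj : ∀ j, k ≤ j → (Nm ^ j).mulVec w = 0 := by
      intro j hj
      have : Nm ^ j = Nm ^ (j - k) * Nm ^ k := by
        rw [← pow_add]; congr 1; omega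
      rw [this, ← Matrix.mulVec_mulVec, hNk, Matrix.mulVec_zero]
    -- exp formula
    have key : ∀ t : ℝ, (exp (t • Ac)).mulVec w
        = Complex.exp ((t : ℂ) * μ) • ∑ j ∈ Finset.range k,
            (((Nat.factorial j : ℕ) : ℝ)⁻¹ * t ^ j) • ((Nm ^ j).mulVec w) := by
      intro t
      have hsplit : t • Ac = ((t : ℂ) * μ) • (1 : Matrix (Fin N) (Fin N) ℂ) + t • Nm := by
        have h5 : Ac = μ • (1 : Matrix (Fin N) (Fin N) ℂ) + Nm := by rw [hNmdef]; abel
        rw [h5, smul_add]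
        congr 1
        rw [← smul_assoc]
        congr 1
      have hcomm : Commute (((t : ℂ) * μ) • (1 : Matrix (Fin N) (Fin N) ℂ)) (t • Nm) :=
        (Commute.one_left (t • Nm)).smul_left _
      rw [hsplit, Matrix.exp_add_of_commute _ _ hcomm, exp_smul_one_complex, smul_mul_assoc, one_mul,
        Matrix.smul_mulVec]
      congr 1
      rw [exp_mulVec_tsum, tsum_eq_sum (s := Finset.range k) ?_]
      · refine Finset.sum_congr rfl fun j hj => ?_
        rw [smul_pow, Matrix.smul_mulVec, smul_smul]
      · intro j hj
        rw [Finset.mem_range, not_lt] at hj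
        rw [smul_pow, Matrix.smul_mulVec, hNj j hj, smul_zero, smul_zero]
    refine Tendsto.congr (fun t => (key t).symm) ?_
    have : (fun t : ℝ => Complex.exp ((t : ℂ) * μ) • ∑ j ∈ Finset.range k,
        (((Nat.factorial j : ℕ) : ℝ)⁻¹ * t ^ j) • ((Nm ^ j).mulVec w))
        = fun t : ℝ => ∑ j ∈ Finset.range k, Complex.exp ((t : ℂ) * μ) •
            ((((Nat.factorial j : ℕ) : ℝ)⁻¹ * t ^ j) • ((Nm ^ j).mulVec w)) := by
      funext t; rw [Finset.smul_sum]
    rw [this]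
    have hzero : (0 : Fin N → ℂ) = ∑ j ∈ Finset.range k, (0 : Fin N → ℂ) := by simp
    rw [hzero]
    refine tendsto_finset_sum _ fun j _ => ?_
    apply squeeze_zero_norm' (a := fun t : ℝ =>
      ((Nat.factorial j : ℕ) : ℝ)⁻¹ * (t ^ j * Real.exp (μ.re * t)) * ‖(Nm ^ j).mulVec w‖)
    · filter_upwards [eventually_ge_atTop (0 : ℝ)] with t ht
      rw [norm_smul, norm_smul]
      have h1 : ‖Complex.exp ((t : ℂ) * μ)‖ = Real.exp (μ.re * t) := by
        rw [Complex.norm_exp]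
        congr 1
        simp [Complex.mul_re, mul_comm]
      have h2 : ‖((Nat.factorial j : ℕ) : ℝ)⁻¹ * t ^ j‖
          = ((Nat.factorial j : ℕ) : ℝ)⁻¹ * t ^ j := by
        rw [Real.norm_eq_abs, abs_of_nonneg]
        positivity
      rw [h1, h2]
      exact le_of_eq (by ring)
    · have h3 := (tendsto_pow_mul_exp_neg' hre j).const_mul (((Nat.factorial j : ℕ) : ℝ)⁻¹)
      rw [mul_zero] at h3
      have h4 := h3.mul_const ‖(Nm ^ j).mulVec w‖
      rw [zero_mul] at h4
      exact h4
  · exact (tendsto_const_nhds : Tendsto (fun _ : ℝ => (0 : Fin N → ℂ)) atTop _).congr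
      fun t => (Matrix.mulVec_zero _).symm
  · intro x y hx hy
    have hadd := hx.add hy
    rw [add_zero] at hadd
    exact hadd.congr fun t => (Matrix.mulVec_add _ _ _).symm

theorem map_smul_ofReal (M : Matrix (Fin N) (Fin N) ℝ) (t : ℝ) :
    (t • M).map (fun a => (a : ℂ)) = t • (M.map (fun a => (a : ℂ))) := by
  ext i j
  simp [Matrix.map_apply, Complex.real_smul]

theorem exp_smul_map_ofReal (M : Matrix (Fin N) (Fin N) ℝ) (t : ℝ) :
    exp (t • (M.map (fun a => (a : ℂ)))) = (exp (t • M)).map (fun a => (a : ℂ)) := by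
  rw [← map_smul_ofReal, exp_map_ofReal]

theorem mulVec_map_ofReal (E : Matrix (Fin N) (Fin N) ℝ) (x : Fin N → ℝ) (i : Fin N) :
    ((E.map (fun a => (a : ℂ))).mulVec (fun j => ((x j : ℝ) : ℂ))) i = ((E.mulVec x) i : ℂ) := by
  exact (RingHom.map_mulVec (Complex.ofRealHom) E x i).symm

theorem decay_real (M : Matrix (Fin N) (Fin N) ℝ)
    (hM : ∀ μ ∈ spectrum ℂ (M.map (fun a => (a : ℂ))), μ.re < 0) (x : Fin N → ℝ) :
    Tendsto (fun t : ℝ => (exp (t • M)).mulVec x) atTop (𝓝 0) := by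
  have hc := decay_complex M hM (fun j => ((x j : ℝ) : ℂ))
  rw [tendsto_pi_nhds] at hc ⊢
  intro i
  have h0 : ((0 : Fin N → ℂ) i) = 0 := rfl
  have h2 := (Complex.continuous_re.tendsto 0).comp (hc i)
  simp only [Complex.zero_re] at h2
  refine h2.congr fun t => ?_
  simp only [Function.comp_apply]
  rw [exp_smul_map_ofReal, mulVec_map_ofReal]
  simp

theorem integral_exp_mulVec (M : Matrix (Fin N) (Fin N) ℝ) (x : Fin N → ℝ) (t : ℝ) :
    (∫ s in (0:ℝ)..t, (exp (s • M)).mulVec (M.mulVec x))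
      = (exp (t • M)).mulVec x - x := by
  letI : SeminormedRing (Matrix (Fin N) (Fin N) ℝ) := Matrix.linftyOpSemiNormedRing
  letI : NormedRing (Matrix (Fin N) (Fin N) ℝ) := Matrix.linftyOpNormedRing
  letI : NormedAlgebra ℝ (Matrix (Fin N) (Fin N) ℝ) := Matrix.linftyOpNormedAlgebra
  letI : NormedAlgebra ℚ (Matrix (Fin N) (Fin N) ℝ) := Matrix.linftyOpNormedAlgebra
  have hLgen : ∀ y : Fin N → ℝ, ∃ L : Matrix (Fin N) (Fin N) ℝ →L[ℝ] (Fin N → ℝ),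
      ∀ E : Matrix (Fin N) (Fin N) ℝ, L E = E.mulVec y := by
    intro y
    let L0 : Matrix (Fin N) (Fin N) ℝ →ₗ[ℝ] (Fin N → ℝ) :=
      { toFun := fun E => E.mulVec y
        map_add' := fun M₁ M₂ => Matrix.add_mulVec _ _ _
        map_smul' := fun r E => Matrix.smul_mulVec r E y }
    exact ⟨⟨L0, LinearMap.continuous_of_finiteDimensional L0⟩, fun E => rfl⟩
  obtain ⟨L, hL⟩ := hLgen x
  obtain ⟨L', hL'⟩ := hLgen (M.mulVec x)
  have hderiv : ∀ s ∈ Set.uIcc (0:ℝ) t,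
      HasDerivAt (fun u : ℝ => (exp (u • M)).mulVec x)
        ((exp (s • M)).mulVec (M.mulVec x)) s := by
    intro s _
    have h1 := hasDerivAt_exp_smul_const (𝕂 := ℝ) M s
    have h2 := L.hasFDerivAt.comp_hasDerivAt s h1
    have h3 : L (exp (s • M) * M) = (exp (s • M)).mulVec (M.mulVec x) := by
      rw [hL, ← Matrix.mulVec_mulVec]
    replace h2 := h2.congr_deriv h3
    have heq : (⇑L ∘ fun u : ℝ => exp (u • M)) = fun u : ℝ => (exp (u • M)).mulVec x := by
      funext u; exact hL _
    exact h2.congr_of_eventuallyEq (Filter.Eventually.of_forall fun u => (hL _).symm)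
  have hcont : Continuous fun s : ℝ => (exp (s • M)).mulVec (M.mulVec x) := by
    have h4 : Continuous fun s : ℝ => exp (s • M) :=
      exp_continuous.comp (continuous_id.smul continuous_const)
    have h5 := L'.continuous.comp h4
    refine Continuous.congr h5 fun s => ?_
    exact hL' _
  have h6 := intervalIntegral.integral_eq_sub_of_hasDerivAt hderiv
    (hcont.intervalIntegrable _ _)
  rwa [zero_smul, exp_zero, Matrix.one_mulVec] at h6

theorem integral_mem_cone {C : Set (Fin N → ℝ)} (hclosed : IsClosed C) (hconv : Convex ℝ C)
    (hcone : ∀ x ∈ C, ∀ t : ℝ, 0 < t → t • x ∈ C) (h0 : (0 : Fin N → ℝ) ∈ C)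
    {g : ℝ → Fin N → ℝ} (hg : Continuous g) {t : ℝ} (ht : 0 ≤ t)
    (hmem : ∀ s, 0 ≤ s → s ≤ t → g s ∈ C) : (∫ s in (0:ℝ)..t, g s) ∈ C := by
  rcases eq_or_lt_of_le ht with h | htpos
  · rw [← h, intervalIntegral.integral_same]; exact h0
  · rw [intervalIntegral.integral_of_le ht]
    have hvol : MeasureTheory.volume (Set.Ioc (0:ℝ) t) = ENNReal.ofReal t := by
      rw [Real.volume_Ioc, sub_zero]
    have hne : MeasureTheory.volume (Set.Ioc (0:ℝ) t) ≠ 0 := by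
      rw [hvol]; simp [ENNReal.ofReal_eq_zero]; linarith
    have hfin : MeasureTheory.volume (Set.Ioc (0:ℝ) t) ≠ ⊤ := by
      rw [hvol]; exact ENNReal.ofReal_ne_top
    have havg : (⨍ s in Set.Ioc (0:ℝ) t, g s ∂MeasureTheory.volume) ∈ C := by
      refine hconv.set_average_mem hclosed hne hfin ?_ ?_
      · exact (MeasureTheory.ae_restrict_iff' measurableSet_Ioc).2
          (Filter.Eventually.of_forall fun s hs => hmem s (le_of_lt hs.1) hs.2)
      · exact hg.integrableOn_Ioc
    have heq : (∫ s in Set.Ioc (0:ℝ) t, g s ∂MeasureTheory.volume)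
        = t • (⨍ s in Set.Ioc (0:ℝ) t, g s ∂MeasureTheory.volume) := by
      rw [MeasureTheory.setAverage_eq, MeasureTheory.measureReal_def, hvol, ENNReal.toReal_ofReal (le_of_lt htpos), smul_smul,
        mul_inv_cancel₀ (ne_of_gt htpos), one_smul]
    rw [heq]
    exact hcone _ havg t htpos

theorem cone_order_bounded {C : Set (Fin N → ℝ)} (hclosed : IsClosed C)
    (hcone : ∀ x ∈ C, ∀ t : ℝ, 0 < t → t • x ∈ C) (hpointed : C ∩ (-C) = {0})
    (z : Fin N → ℝ) : ∃ Mb : ℝ, 0 ≤ Mb ∧ ∀ u ∈ C, z - u ∈ C → ‖u‖ ≤ Mb := by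
  by_contra hcon
  push_neg at hcon
  have hex : ∀ k : ℕ, ∃ u, u ∈ C ∧ z - u ∈ C ∧ (k : ℝ) < ‖u‖ := by
    intro k
    obtain ⟨u, hu1, hu2, hu3⟩ := hcon (k : ℝ) (Nat.cast_nonneg k)
    exact ⟨u, hu1, hu2, hu3⟩
  choose u hu1 hu2 hu3 using hex
  have hupos : ∀ k, 0 < ‖u k‖ := fun k => lt_of_le_of_lt (Nat.cast_nonneg k) (hu3 k)
  set w : ℕ → (Fin N → ℝ) := fun k => ‖u k‖⁻¹ • u k with hwdef
  have hw : ∀ k, w k ∈ Metric.sphere (0 : Fin N → ℝ) 1 := by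
    intro k
    rw [mem_sphere_zero_iff_norm, hwdef, norm_smul, norm_inv, norm_norm,
      inv_mul_cancel₀ (ne_of_gt (hupos k))]
  obtain ⟨w₀, hw₀s, φ, hφ, hφlim⟩ := (isCompact_sphere (0 : Fin N → ℝ) 1).tendsto_subseq hw
  have hw₀C : w₀ ∈ C :=
    hclosed.mem_of_tendsto hφlim (Filter.Eventually.of_forall fun k =>
      hcone _ (hu1 _) _ (inv_pos.2 (hupos _)))
  have hnorm_tendsto : Tendsto (fun k : ℕ => ‖u (φ k)‖) atTop atTop := by
    refine tendsto_atTop_mono (fun k => ?_) tendsto_natCast_atTop_atTop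
    calc (k : ℝ) ≤ (φ k : ℝ) := by exact_mod_cast hφ.le_apply
    _ ≤ ‖u (φ k)‖ := le_of_lt (hu3 (φ k))
  have hinv : Tendsto (fun k : ℕ => ‖u (φ k)‖⁻¹) atTop (𝓝 0) :=
    hnorm_tendsto.inv_tendsto_atTop
  have hnegmem : -w₀ ∈ C := by
    have hvm : ∀ k : ℕ, ‖u (φ k)‖⁻¹ • (z - u (φ k)) ∈ C :=
      fun k => hcone _ (hu2 _) _ (inv_pos.2 (hupos _))
    have hvt : Tendsto (fun k : ℕ => ‖u (φ k)‖⁻¹ • (z - u (φ k))) atTop (𝓝 (-w₀)) := by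
      have h1 : Tendsto (fun k : ℕ => ‖u (φ k)‖⁻¹ • z) atTop (𝓝 0) := by
        have := hinv.smul_const z
        rwa [zero_smul] at this
      have h2 : Tendsto (fun k : ℕ => ‖u (φ k)‖⁻¹ • z - w (φ k)) atTop (𝓝 (0 - w₀)) :=
        h1.sub hφlim
      rw [zero_sub] at h2
      refine h2.congr fun k => ?_
      rw [smul_sub]
    exact hclosed.mem_of_tendsto hvt (Filter.Eventually.of_forall hvm)
  have hzero : w₀ = 0 := by
    have hmem : w₀ ∈ C ∩ (-C) := ⟨hw₀C, by rwa [Set.mem_neg]⟩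
    rw [hpointed] at hmem
    exact hmem
  rw [mem_sphere_zero_iff_norm] at hw₀s
  rw [hzero, norm_zero] at hw₀s
  norm_num at hw₀s

theorem image_interior_eq (M : Matrix (Fin N) (Fin N) ℝ) (hM : IsUnit M)
    (S : Set (Fin N → ℝ)) :
    M.mulVec '' (interior S) = interior (M.mulVec '' S) := by
  haveI := M.invertibleOfIsUnitDet ((Matrix.isUnit_iff_isUnit_det M).1 hM)
  let le := Matrix.toLinearEquiv' M this
  let ce := le.toContinuousLinearEquiv
  have hce : ⇑ce = M.mulVec := by
    funext v
    rfl
  have h := ce.toHomeomorph.image_interior S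
  simpa [hce] using h

theorem exists_preimage_interior {C : Set (Fin N → ℝ)} (M : Matrix (Fin N) (Fin N) ℝ)
    (hM : IsUnit M) (hMC : M.mulVec '' C = C) {e : Fin N → ℝ} (he : e ∈ interior C) :
    ∃ u ∈ interior C, M.mulVec u = e := by
  have h : M.mulVec '' (interior C) = interior C := by
    rw [image_interior_eq M hM, hMC]
  rw [← h] at he
  obtain ⟨u, hu, hue⟩ := he
  exact ⟨u, hu, hue⟩

theorem mapsTo_interior {C : Set (Fin N → ℝ)} (M : Matrix (Fin N) (Fin N) ℝ)
    (hM : IsUnit M) (hsub : ∀ x ∈ C, M.mulVec x ∈ C) {u : Fin N → ℝ}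
    (hu : u ∈ interior C) : M.mulVec u ∈ interior C := by
  have h1 : M.mulVec u ∈ M.mulVec '' (interior C) := Set.mem_image_of_mem _ hu
  rw [image_interior_eq M hM] at h1
  exact interior_mono (by rintro y ⟨x, hx, rfl⟩; exact hsub x hx) h1

theorem exp_smul_add_smul_one (B : Matrix (Fin N) (Fin N) ℝ) (δ t : ℝ) :
    exp (t • (B + δ • (1 : Matrix (Fin N) (Fin N) ℝ)))
      = Real.exp (t * δ) • exp (t • B) := by
  letI : SeminormedRing (Matrix (Fin N) (Fin N) ℝ) := Matrix.linftyOpSemiNormedRing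
  letI : NormedRing (Matrix (Fin N) (Fin N) ℝ) := Matrix.linftyOpNormedRing
  letI : NormedAlgebra ℝ (Matrix (Fin N) (Fin N) ℝ) := Matrix.linftyOpNormedAlgebra
  letI : NormedAlgebra ℚ (Matrix (Fin N) (Fin N) ℝ) := Matrix.linftyOpNormedAlgebra
  have h1 : t • (B + δ • (1 : Matrix (Fin N) (Fin N) ℝ))
      = (t * δ) • (1 : Matrix (Fin N) (Fin N) ℝ) + t • B := by
    rw [smul_add, smul_smul, add_comm]
  rw [h1, Matrix.exp_add_of_commute _ _ ((Commute.one_left (t • B)).smul_left _), exp_smul_one_real,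
    smul_mul_assoc, one_mul]

theorem isUnit_of_spectrum_neg (A : Matrix (Fin N) (Fin N) ℝ)
    (hAh : ∀ μ ∈ spectrum ℂ (A.map (fun a => (a : ℂ))), μ.re < 0) : IsUnit A := by
  by_contra h
  have hd : A.det = 0 := by
    rw [Matrix.isUnit_iff_isUnit_det, isUnit_iff_ne_zero, not_ne_iff] at h
    exact h
  have hdc : (A.map (fun a => (a : ℂ))).det = 0 := by
    have := RingHom.map_det Complex.ofRealHom A
    rw [hd] at this
    rw [map_zero] at this; exact this.symm
  have h0 : (0 : ℂ) ∈ spectrum ℂ (A.map (fun a => (a : ℂ))) := by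
    rw [spectrum.zero_mem_iff, Matrix.isUnit_iff_isUnit_det, hdc]
    simp
  have := hAh 0 h0
  norm_num at this

theorem exists_eigenvector {B : Matrix (Fin N) (Fin N) ℝ} {μ : ℂ}
    (h : μ ∈ spectrum ℂ (B.map (fun a => (a : ℂ)))) :
    ∃ z : Fin N → ℂ, z ≠ 0 ∧ (B.map (fun a => (a : ℂ))).mulVec z = μ • z := by
  set Bc := B.map (fun a => (a : ℂ)) with hBc
  have h1 : ¬ IsUnit (algebraMap ℂ (Matrix (Fin N) (Fin N) ℂ) μ - Bc) :=
    (spectrum.mem_iff).1 h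
  have hdet : (algebraMap ℂ (Matrix (Fin N) (Fin N) ℂ) μ - Bc).det = 0 := by
    by_contra hne
    exact h1 ((Matrix.isUnit_iff_isUnit_det _).2 (isUnit_iff_ne_zero.2 hne))
  obtain ⟨v, hv0, hv⟩ := (Matrix.exists_mulVec_eq_zero_iff).2 hdet
  refine ⟨v, hv0, ?_⟩
  rw [Matrix.sub_mulVec] at hv
  have h2 : (algebraMap ℂ (Matrix (Fin N) (Fin N) ℂ) μ).mulVec v = μ • v := by
    rw [Algebra.algebraMap_eq_smul_one, Matrix.smul_mulVec, Matrix.one_mulVec]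
  rw [h2] at hv
  have := sub_eq_zero.1 hv
  rw [← this]

theorem continuous_exp_smul_mulVec (M : Matrix (Fin N) (Fin N) ℝ) (y : Fin N → ℝ) :
    Continuous fun s : ℝ => (exp (s • M)).mulVec y := by
  letI : SeminormedRing (Matrix (Fin N) (Fin N) ℝ) := Matrix.linftyOpSemiNormedRing
  letI : NormedRing (Matrix (Fin N) (Fin N) ℝ) := Matrix.linftyOpNormedRing
  letI : NormedAlgebra ℝ (Matrix (Fin N) (Fin N) ℝ) := Matrix.linftyOpNormedAlgebra
  letI : NormedAlgebra ℚ (Matrix (Fin N) (Fin N) ℝ) := Matrix.linftyOpNormedAlgebra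
  let L0 : Matrix (Fin N) (Fin N) ℝ →ₗ[ℝ] (Fin N → ℝ) :=
    { toFun := fun E => E.mulVec y
      map_add' := fun M₁ M₂ => Matrix.add_mulVec _ _ _
      map_smul' := fun r E => Matrix.smul_mulVec r E y }
  have h4 : Continuous fun s : ℝ => exp (s • M) :=
    exp_continuous.comp (continuous_id.smul continuous_const)
  exact (LinearMap.continuous_of_finiteDimensional L0).comp h4

theorem mulVec_map_re (E : Matrix (Fin N) (Fin N) ℝ) (z : Fin N → ℂ) (i : Fin N) :
    (((E.map fun a => (a : ℂ)).mulVec z) i).re = (E.mulVec (fun j => (z j).re)) i := by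
  simp [Matrix.mulVec, dotProduct, Complex.re_sum, Matrix.map_apply, Complex.mul_re]

theorem mulVec_map_im (E : Matrix (Fin N) (Fin N) ℝ) (z : Fin N → ℂ) (i : Fin N) :
    (((E.map fun a => (a : ℂ)).mulVec z) i).im = (E.mulVec (fun j => (z j).im)) i := by
  simp [Matrix.mulVec, dotProduct, Complex.im_sum, Matrix.map_apply, Complex.mul_im]

end Aux

/-- Invariance of stability under automorphisms of a proper cone:
if `A ∈ M(C)` is Hurwitz, `D₁, D₂` are automorphisms of `C`, and `D₁AD₂ ∈ M(C)`,
then `D₁AD₂` is Hurwitz. -/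



theorem hurwitz_of_aut_mul_aut {n : ℕ} (C : Set (Fin n → ℝ))
    (hclosed : IsClosed C) (hconv : Convex ℝ C)
    (hcone : ∀ x ∈ C, ∀ t : ℝ, 0 < t → t • x ∈ C)
    (hpointed : C ∩ (-C) = {0})
    (hint : (interior C).Nonempty)
    (A D₁ D₂ : Matrix (Fin n) (Fin n) ℝ)
    (hA : memM C A) (hAh : IsHurwitz A)
    (hD₁ : IsUnit D₁) (hD₁C : D₁.mulVec '' C = C)
    (hD₂ : IsUnit D₂) (hD₂C : D₂.mulVec '' C = C)
    (hDAD : memM C (D₁ * A * D₂)) :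
    IsHurwitz (D₁ * A * D₂) := by
  classical
  -- basic cone facts
  have h0C : (0 : Fin n → ℝ) ∈ C := by
    have h : (0 : Fin n → ℝ) ∈ ({0} : Set (Fin n → ℝ)) := rfl
    rw [← hpointed] at h; exact h.1
  have haddC : ∀ x ∈ C, ∀ y ∈ C, x + y ∈ C := by
    intro x hx y hy
    have hmid : (1/2 : ℝ) • x + (1/2 : ℝ) • y ∈ C :=
      hconv hx hy (by norm_num) (by norm_num) (by norm_num)
    have h2 := hcone _ hmid 2 (by norm_num)
    rw [smul_add, smul_smul, smul_smul] at h2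
    norm_num at h2
    exact h2
  have hsmulC : ∀ x ∈ C, ∀ t : ℝ, 0 ≤ t → t • x ∈ C := by
    intro x hx t ht
    rcases eq_or_lt_of_le ht with h | h
    · rw [← h, zero_smul]; exact h0C
    · exact hcone x hx t h
  -- A is invertible
  have hAunit : IsUnit A := isUnit_of_spectrum_neg A hAh
  have hAdet : IsUnit A.det := (Matrix.isUnit_iff_isUnit_det A).1 hAunit
  -- -A⁻¹ maps C into C
  have hinvC : ∀ y ∈ C, -(A⁻¹.mulVec y) ∈ C := by
    intro y hy
    set p := -(A⁻¹.mulVec y) with hp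
    have hAp : A.mulVec p = -y := by
      rw [hp, Matrix.mulVec_neg, Matrix.mulVec_mulVec, Matrix.mul_nonsing_inv A hAdet,
        Matrix.one_mulVec]
    have hintegral : ∀ t : ℝ, 0 ≤ t → (∫ s in (0:ℝ)..t, (exp (s • A)).mulVec y) ∈ C := by
      intro t ht
      exact integral_mem_cone hclosed hconv hcone h0C (continuous_exp_smul_mulVec A y) ht
        (fun s hs _ => hA s hs y hy)
    have hid : ∀ t : ℝ, (∫ s in (0:ℝ)..t, (exp (s • A)).mulVec y)
        = p - (exp (t • A)).mulVec p := by
      intro t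
      have h1 := integral_exp_mulVec A p t
      rw [hAp] at h1
      simp only [Matrix.mulVec_neg] at h1
      rw [intervalIntegral.integral_neg] at h1
      have h2 := neg_eq_iff_eq_neg.1 h1
      rw [h2, neg_sub]
    have hlim : Tendsto (fun t : ℝ => p - (exp (t • A)).mulVec p) atTop (𝓝 p) := by
      have h4 := decay_real A hAh p
      have h5 := Tendsto.sub (tendsto_const_nhds : Tendsto (fun _ : ℝ => p) atTop (𝓝 p)) h4
      rwa [sub_zero] at h5
    refine hclosed.mem_of_tendsto hlim ?_
    filter_upwards [eventually_ge_atTop (0:ℝ)] with t ht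
    rw [← hid t]
    exact hintegral t ht
  -- construct x₀ in the interior
  obtain ⟨e, he⟩ := hint
  obtain ⟨u, huI, huD⟩ := exists_preimage_interior D₁ hD₁ hD₁C he
  have hinvUnit : IsUnit (-(A⁻¹)) := by
    refine IsUnit.neg ?_
    rw [Matrix.isUnit_iff_isUnit_det, Matrix.det_nonsing_inv]
    exact isUnit_ringInverse.2 hAdet
  have hw₁I : (-(A⁻¹)).mulVec u ∈ interior C := by
    refine mapsTo_interior (-(A⁻¹)) hinvUnit ?_ huI
    intro x hx
    rw [Matrix.neg_mulVec]
    exact hinvC x hx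
  obtain ⟨x₀, hx₀I, hx₀D⟩ := exists_preimage_interior D₂ hD₂ hD₂C hw₁I
  have hx₀C : x₀ ∈ C := interior_subset hx₀I
  set B := D₁ * A * D₂ with hB
  have hBx₀ : B.mulVec x₀ = -e := by
    rw [hB, ← Matrix.mulVec_mulVec, hx₀D, Matrix.mulVec_mulVec, Matrix.mul_neg,
      Matrix.mul_assoc D₁ A A⁻¹, Matrix.mul_nonsing_inv A hAdet, Matrix.mul_one,
      Matrix.neg_mulVec, huD]
  -- choose δ > 0 with e - δ • x₀ ∈ interior C
  obtain ⟨δ, hδpos, hδI⟩ : ∃ δ : ℝ, 0 < δ ∧ e - δ • x₀ ∈ interior C := by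
    have hcont : Continuous fun δ : ℝ => e - δ • x₀ := by continuity
    have h5 : Tendsto (fun δ : ℝ => e - δ • x₀) (𝓝 0) (𝓝 e) := by
      have h6 := hcont.tendsto 0
      simpa using h6
    have h6 := h5.eventually (isOpen_interior.eventually_mem he)
    rcases Metric.eventually_nhds_iff.1 h6 with ⟨ε, hε, hball⟩
    refine ⟨ε/2, by linarith, hball ?_⟩
    rw [Real.dist_eq]
    rw [sub_zero, abs_of_pos (by linarith : (0:ℝ) < ε/2)]
    linarith
  have hwC : e - δ • x₀ ∈ C := interior_subset hδI
  set B' := B + δ • (1 : Matrix (Fin n) (Fin n) ℝ) with hB'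
  have hB'x₀ : B'.mulVec x₀ = -(e - δ • x₀) := by
    rw [hB', Matrix.add_mulVec, hBx₀, Matrix.smul_mulVec, Matrix.one_mulVec]
    abel
  have hmemB' : ∀ t : ℝ, 0 ≤ t → ∀ x ∈ C, (exp (t • B')).mulVec x ∈ C := by
    intro t ht x hx
    rw [hB', exp_smul_add_smul_one, Matrix.smul_mulVec]
    exact hsmulC _ (hDAD t ht x hx) _ (le_of_lt (Real.exp_pos _))
  -- x₀ - exp(tB')x₀ ∈ C for t ≥ 0
  have hkey : ∀ t : ℝ, 0 ≤ t → x₀ - (exp (t • B')).mulVec x₀ ∈ C := by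
    intro t ht
    have h1 := integral_exp_mulVec B' x₀ t
    rw [hB'x₀] at h1
    simp only [Matrix.mulVec_neg] at h1
    rw [intervalIntegral.integral_neg] at h1
    have h2 := neg_eq_iff_eq_neg.1 h1
    rw [neg_sub] at h2
    rw [← h2]
    exact integral_mem_cone hclosed hconv hcone h0C (continuous_exp_smul_mulVec B' _) ht
      (fun s hs _ => hmemB' s hs _ hwC)
  -- order bound
  obtain ⟨Mb, hMb0, hMb⟩ := cone_order_bounded hclosed hcone hpointed ((2:ℝ) • x₀)
  obtain ⟨r, hrpos, hball⟩ := Metric.isOpen_iff.1 isOpen_interior x₀ hx₀I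
  -- operator bound
  have hbound2 : ∀ t : ℝ, 0 ≤ t → ∀ y : Fin n → ℝ, ‖y‖ < r →
      ‖(exp (t • B')).mulVec y‖ ≤ 2 * Mb := by
    intro t ht y hy
    set E := exp (t • B') with hE
    have hyp : x₀ + y ∈ C := by
      refine interior_subset (hball ?_)
      rw [Metric.mem_ball, dist_eq_norm, add_sub_cancel_left]
      exact hy
    have hym : x₀ - y ∈ C := by
      refine interior_subset (hball ?_)
      rw [Metric.mem_ball, dist_eq_norm, sub_sub_cancel_left, norm_neg]
      exact hy
    have hu1 : E.mulVec (x₀ + y) ∈ C := hmemB' t ht _ hyp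
    have hu0 : E.mulVec x₀ ∈ C := hmemB' t ht _ hx₀C
    have hs1 : x₀ - E.mulVec x₀ ∈ C := hkey t ht
    have hs2 : E.mulVec (x₀ - y) ∈ C := hmemB' t ht _ hym
    have hdiff1 : (2:ℝ) • x₀ - E.mulVec (x₀ + y)
        = (x₀ - E.mulVec x₀) + ((x₀ - E.mulVec x₀) + E.mulVec (x₀ - y)) := by
      rw [Matrix.mulVec_add, Matrix.mulVec_sub, two_smul]
      abel
    have hb1 : ‖E.mulVec (x₀ + y)‖ ≤ Mb := by
      refine hMb _ hu1 ?_
      rw [hdiff1]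
      exact haddC _ hs1 _ (haddC _ hs1 _ hs2)
    have hdiff0 : (2:ℝ) • x₀ - E.mulVec x₀ = (x₀ - E.mulVec x₀) + x₀ := by
      rw [two_smul]; abel
    have hb0 : ‖E.mulVec x₀‖ ≤ Mb := by
      refine hMb _ hu0 ?_
      rw [hdiff0]
      exact haddC _ hs1 _ hx₀C
    have heq2 : E.mulVec y = E.mulVec (x₀ + y) - E.mulVec x₀ := by
      rw [Matrix.mulVec_add]; abel
    rw [heq2]
    calc ‖E.mulVec (x₀ + y) - E.mulVec x₀‖ ≤ ‖E.mulVec (x₀ + y)‖ + ‖E.mulVec x₀‖ :=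
          norm_sub_le _ _
    _ ≤ 2 * Mb := by linarith
  have hbound : ∀ t : ℝ, 0 ≤ t → ∀ y : Fin n → ℝ,
      ‖(exp (t • B')).mulVec y‖ ≤ (4 * Mb / r) * ‖y‖ := by
    intro t ht y
    rcases eq_or_ne y 0 with rfl | hy0
    · rw [Matrix.mulVec_zero, norm_zero]
      simp
    have hny : 0 < ‖y‖ := norm_pos_iff.2 hy0
    set c := r / (2 * ‖y‖) with hc
    have hcpos : 0 < c := by positivity
    have hnorm : ‖c • y‖ < r := by
      rw [norm_smul, Real.norm_eq_abs, abs_of_pos hcpos, hc]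
      rw [div_mul_eq_mul_div, mul_comm]
      rw [mul_comm (2:ℝ) ‖y‖, ← div_div]
      have : ‖y‖ * r / ‖y‖ = r := by field_simp
      rw [this]
      linarith
    have h3 := hbound2 t ht (c • y) hnorm
    rw [Matrix.mulVec_smul, norm_smul, Real.norm_eq_abs, abs_of_pos hcpos] at h3
    have h4 : ‖(exp (t • B')).mulVec y‖ ≤ (2 * Mb) / c := by
      rw [le_div_iff₀ hcpos]
      linarith [h3, mul_comm c ‖(exp (t • B')).mulVec y‖]
    calc ‖(exp (t • B')).mulVec y‖ ≤ (2 * Mb) / c := h4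
    _ = (4 * Mb / r) * ‖y‖ := by
        rw [hc]
        field_simp
        ring
  -- final contradiction with an eigenvalue of nonneg real part
  intro μ hμ
  by_contra hre
  push_neg at hre
  obtain ⟨z, hz0, hz⟩ := exists_eigenvector (B := D₁ * A * D₂) hμ
  have hB'c : (B'.map fun a => (a : ℂ))
      = (D₁ * A * D₂).map (fun a => (a : ℂ)) + (δ:ℂ) • (1 : Matrix (Fin n) (Fin n) ℂ) := by
    rw [hB', ← hB]
    ext i j
    by_cases hij : i = j <;>
      simp [Matrix.map_apply, Matrix.add_apply, Matrix.smul_apply, Matrix.one_apply, hij]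
  have heig' : (B'.map fun a => (a : ℂ)).mulVec z = (μ + δ) • z := by
    rw [hB'c, Matrix.add_mulVec, hz, Matrix.smul_mulVec, Matrix.one_mulVec, add_smul]
  obtain ⟨i₀, hi₀⟩ : ∃ i, z i ≠ 0 := by
    by_contra hall
    push_neg at hall
    exact hz0 (funext hall)
  set pv := fun j => (z j).re with hpv
  set qv := fun j => (z j).im with hqv
  set K := 4 * Mb / r with hK
  have hcomp : ∀ t : ℝ, 0 ≤ t →
      Real.exp (t * (μ.re + δ)) * ‖z i₀‖ ≤ K * ‖pv‖ + K * ‖qv‖ := by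
    intro t ht
    have heigt : (t • (B'.map fun a => (a : ℂ))).mulVec z = ((t:ℂ) * (μ + δ)) • z := by
      rw [Matrix.smul_mulVec, heig', ← smul_assoc]
      congr 1
    have hexp := exp_mulVec_eigen (t • (B'.map fun a => (a : ℂ))) z ((t:ℂ) * (μ + δ)) heigt
    have h8 : exp (t • (B'.map fun a => (a : ℂ))) = (exp (t • B')).map (fun a => (a : ℂ)) :=
      exp_smul_map_ofReal B' t
    rw [h8] at hexp
    set E := exp (t • B') with hE
    have h7 : (((E.map fun a => (a : ℂ))).mulVec z) i₀ = Complex.exp ((t:ℂ) * (μ + δ)) * z i₀ := by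
      rw [hexp]; rfl
    have habs : ‖(((E.map fun a => (a : ℂ))).mulVec z) i₀‖
        = Real.exp (t * (μ.re + δ)) * ‖z i₀‖ := by
      rw [h7, norm_mul, Complex.norm_exp]
      congr 2
      simp [Complex.add_re, Complex.mul_re]
    rw [← habs]
    have hrebound : |((((E.map fun a => (a : ℂ))).mulVec z) i₀).re| ≤ K * ‖pv‖ := by
      rw [mulVec_map_re]
      calc |(E.mulVec pv) i₀| ≤ ‖E.mulVec pv‖ := by
            rw [← Real.norm_eq_abs]; exact norm_le_pi_norm _ i₀
      _ ≤ K * ‖pv‖ := hbound t ht pv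
    have himbound : |((((E.map fun a => (a : ℂ))).mulVec z) i₀).im| ≤ K * ‖qv‖ := by
      rw [mulVec_map_im]
      calc |(E.mulVec qv) i₀| ≤ ‖E.mulVec qv‖ := by
            rw [← Real.norm_eq_abs]; exact norm_le_pi_norm _ i₀
      _ ≤ K * ‖qv‖ := hbound t ht qv
    calc ‖(((E.map fun a => (a : ℂ))).mulVec z) i₀‖
        ≤ |((((E.map fun a => (a : ℂ))).mulVec z) i₀).re|
          + |((((E.map fun a => (a : ℂ))).mulVec z) i₀).im| :=
          Complex.norm_le_abs_re_add_abs_im _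
    _ ≤ K * ‖pv‖ + K * ‖qv‖ := add_le_add hrebound himbound
  have hgrow : Tendsto (fun t : ℝ => Real.exp (t * (μ.re + δ)) * ‖z i₀‖)
      atTop atTop := by
    have hc : (0:ℝ) < μ.re + δ := by linarith
    have h1 : Tendsto (fun t : ℝ => t * (μ.re + δ)) atTop atTop :=
      Tendsto.atTop_mul_const hc tendsto_id
    have h2 := Real.tendsto_exp_atTop.comp h1
    exact h2.atTop_mul_const (norm_pos_iff.2 hi₀)
  obtain ⟨t, htprop⟩ := ((hgrow.eventually_gt_atTop (K * ‖pv‖ + K * ‖qv‖)).and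
    (eventually_ge_atTop (0:ℝ))).exists
  exact absurd (hcomp t htprop.2) (not_le.2 htprop.1)
end

section
/- Let n ≥ 2, let α ∈ ℝ, let B₁ be an (n−1)×(n−1) real skew-symmetric matrix, and let b ∈ ℝ^{n−1}. Let B be the n×n block matrix with upper-left block B₁, upper-right block b, lower-left block bᵀ, and lower-right entry 0. Then the matrix H = exp(α·I_n + B) maps the ice-cream cone K_n onto K_n. -/
open Matrix

/-- The ice-cream cone `K_{m+1} ⊆ ℝ^{m+1}`. -/
def iceCream (m : ℕ) : Set (Fin (m + 1) → ℝ) :=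
  {x | (∑ i : Fin m, x i.castSucc ^ 2) ≤ x (Fin.last m) ^ 2 ∧ 0 ≤ x (Fin.last m)}

namespace IceCreamAux

open NormedSpace

variable {m : ℕ}

noncomputable def Jm (m : ℕ) : Matrix (Fin (m+1)) (Fin (m+1)) ℝ :=
  diagonal (fun i => if i = Fin.last m then (-1:ℝ) else 1)

lemma Jm_mul_Jm : Jm m * Jm m = 1 := by
  rw [Jm, diagonal_mul_diagonal, ← diagonal_one]
  apply congrArg
  funext i; by_cases h : i = Fin.last m <;> simp [h]

lemma Jm_transpose : (Jm m)ᵀ = Jm m := diagonal_transpose _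

noncomputable def Bmat (B₁ : Matrix (Fin m) (Fin m) ℝ) (b : Fin m → ℝ) :
    Matrix (Fin (m+1)) (Fin (m+1)) ℝ :=
  Matrix.reindex finSumFinEquiv finSumFinEquiv
    (Matrix.fromBlocks B₁ (Matrix.of fun i (_ : Fin 1) => b i)
      (Matrix.of fun (_ : Fin 1) j => b j) 0)

lemma symm_last : finSumFinEquiv.symm (Fin.last m) = Sum.inr (0 : Fin 1) := by
  rw [show Fin.last m = Fin.natAdd m (0 : Fin 1) from by ext; simp]
  exact finSumFinEquiv_symm_apply_natAdd _

lemma symm_castSucc (i : Fin m) :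
    finSumFinEquiv.symm (i.castSucc : Fin (m+1)) = Sum.inl i :=
  finSumFinEquiv_symm_apply_castAdd _

lemma Bmat_cc (B₁ : Matrix (Fin m) (Fin m) ℝ) (b : Fin m → ℝ) (i j : Fin m) :
    Bmat B₁ b i.castSucc j.castSucc = B₁ i j := by
  simp [Bmat, reindex_apply, submatrix_apply, symm_castSucc]

lemma Bmat_cl (B₁ : Matrix (Fin m) (Fin m) ℝ) (b : Fin m → ℝ) (i : Fin m) :
    Bmat B₁ b i.castSucc (Fin.last m) = b i := by
  simp [Bmat, reindex_apply, submatrix_apply, symm_castSucc, symm_last]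

lemma Bmat_lc (B₁ : Matrix (Fin m) (Fin m) ℝ) (b : Fin m → ℝ) (j : Fin m) :
    Bmat B₁ b (Fin.last m) j.castSucc = b j := by
  simp [Bmat, reindex_apply, submatrix_apply, symm_castSucc, symm_last]

lemma Bmat_ll (B₁ : Matrix (Fin m) (Fin m) ℝ) (b : Fin m → ℝ) :
    Bmat B₁ b (Fin.last m) (Fin.last m) = 0 := by
  simp [Bmat, reindex_apply, submatrix_apply, symm_last]

lemma castSucc_ne_last (i : Fin m) : (i.castSucc : Fin (m+1)) ≠ Fin.last m :=
  (Fin.castSucc_lt_last i).ne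

lemma Bmat_skew (B₁ : Matrix (Fin m) (Fin m) ℝ) (hB₁ : B₁ᵀ = -B₁) (b : Fin m → ℝ) :
    (Bmat B₁ b)ᵀ = -(Jm m * Bmat B₁ b * Jm m) := by
  ext i j
  rw [transpose_apply, neg_apply, Jm, mul_diagonal, diagonal_mul]
  induction i using Fin.lastCases with
  | last =>
    induction j using Fin.lastCases with
    | last => simp [Bmat_ll]
    | cast j =>
      rw [Bmat_cl, Bmat_lc]
      simp [(Fin.castSucc_lt_last j).ne]
  | cast i =>
    induction j using Fin.lastCases with
    | last =>
      rw [Bmat_lc, Bmat_cl]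
      simp [(Fin.castSucc_lt_last i).ne]
    | cast j =>
      rw [Bmat_cc, Bmat_cc, ← transpose_apply B₁ j i, hB₁]
      simp [(Fin.castSucc_lt_last i).ne, (Fin.castSucc_lt_last j).ne]

lemma Bmat_neg (B₁ : Matrix (Fin m) (Fin m) ℝ) (b : Fin m → ℝ) :
    Bmat (-B₁) (-b) = -(Bmat B₁ b) := by
  ext i j
  rw [neg_apply]
  induction i using Fin.lastCases with
  | last =>
    induction j using Fin.lastCases with
    | last => rw [Bmat_ll, Bmat_ll]; ring
    | cast j => rw [Bmat_lc, Bmat_lc]; rfl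
  | cast i =>
    induction j using Fin.lastCases with
    | last => rw [Bmat_cl, Bmat_cl]; rfl
    | cast j => rw [Bmat_cc, Bmat_cc]; rfl

lemma isUnit_Jm : IsUnit (Jm m) := ⟨⟨Jm m, Jm m, Jm_mul_Jm, Jm_mul_Jm⟩, rfl⟩

lemma Jm_inv : (Jm m)⁻¹ = Jm m := inv_eq_right_inv Jm_mul_Jm

lemma exp_J_rel (X : Matrix (Fin (m+1)) (Fin (m+1)) ℝ)
    (hX : Xᵀ = -(Jm m * X * Jm m)) :
    (exp X)ᵀ * Jm m * exp X = Jm m := by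
  have h1 : (exp X)ᵀ = Jm m * exp (-X) * Jm m := by
    rw [← Matrix.exp_transpose, hX]
    have : -(Jm m * X * Jm m) = Jm m * (-X) * (Jm m)⁻¹ := by
      rw [Jm_inv]; noncomm_ring
    rw [this, Matrix.exp_conj _ _ isUnit_Jm, Jm_inv]
  rw [h1]
  have h2 : exp (-X) * exp X = 1 := by
    rw [← Matrix.exp_add_of_commute _ _ (Commute.neg_left (Commute.refl X)),
      neg_add_cancel, exp_zero]
  calc Jm m * exp (-X) * Jm m * Jm m * exp X
      = Jm m * exp (-X) * (Jm m * Jm m) * exp X := by noncomm_ring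
    _ = Jm m * (exp (-X) * exp X) := by rw [Jm_mul_Jm]; noncomm_ring
    _ = Jm m := by rw [h2, mul_one]

lemma rev_rel (A : Matrix (Fin (m+1)) (Fin (m+1)) ℝ)
    (h : Aᵀ * Jm m * A = Jm m) : A * Jm m * Aᵀ = Jm m := by
  have h1 : Aᵀ * (Jm m * A * Jm m) = 1 := by
    calc Aᵀ * (Jm m * A * Jm m) = (Aᵀ * Jm m * A) * Jm m := by noncomm_ring
      _ = 1 := by rw [h, Jm_mul_Jm]
  have h2 : (Jm m * A * Jm m) * Aᵀ = 1 := mul_eq_one_comm.mp h1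
  calc A * Jm m * Aᵀ = Jm m * (Jm m * A * Jm m * Aᵀ) := by
        rw [show Jm m * (Jm m * A * Jm m * Aᵀ) = (Jm m * Jm m) * A * Jm m * Aᵀ by noncomm_ring,
          Jm_mul_Jm]
        noncomm_ring
    _ = Jm m := by rw [h2, mul_one]

lemma quad_pres (A : Matrix (Fin (m+1)) (Fin (m+1)) ℝ)
    (h : Aᵀ * Jm m * A = Jm m) (x : Fin (m+1) → ℝ) :
    (A.mulVec x) ⬝ᵥ (Jm m).mulVec (A.mulVec x) = x ⬝ᵥ (Jm m).mulVec x := by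
  rw [mulVec_mulVec, dotProduct_mulVec, ← mulVec_transpose, mulVec_mulVec,
    transpose_mul, Jm_transpose, show Aᵀ * Jm m * A = Aᵀ * (Jm m * A) by noncomm_ring] at *
  rw [h, dotProduct_comm]

lemma quad_val (x : Fin (m+1) → ℝ) :
    x ⬝ᵥ (Jm m).mulVec x = (∑ i : Fin m, x i.castSucc ^ 2) - x (Fin.last m) ^ 2 := by
  simp only [dotProduct, Jm, mulVec_diagonal]
  rw [Fin.sum_univ_castSucc]
  simp only [castSucc_ne_last, if_false, if_true, ite_true, reduceIte, if_neg, pow_two]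
  simp [castSucc_ne_last]
  ring

lemma row_id (A : Matrix (Fin (m+1)) (Fin (m+1)) ℝ) (h : A * Jm m * Aᵀ = Jm m) :
    ∑ k : Fin m, A (Fin.last m) k.castSucc ^ 2 = A (Fin.last m) (Fin.last m) ^ 2 - 1 := by
  have key : (A * Jm m * Aᵀ) (Fin.last m) (Fin.last m)
      = ∑ k, A (Fin.last m) k * (if k = Fin.last m then (-1:ℝ) else 1) * A (Fin.last m) k := by
    rw [mul_apply]
    refine Finset.sum_congr rfl fun k _ => ?_
    rw [Jm, mul_diagonal, transpose_apply]
  rw [h] at key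
  rw [Jm, diagonal_apply_eq, if_pos rfl, Fin.sum_univ_castSucc] at key
  simp only [castSucc_ne_last, if_false, if_pos rfl, mul_one] at key
  norm_num at key
  have : ∑ k : Fin m, A (Fin.last m) k.castSucc ^ 2
      = ∑ k : Fin m, A (Fin.last m) k.castSucc * A (Fin.last m) k.castSucc :=
    Finset.sum_congr rfl fun k _ => sq _
  rw [this]
  nlinarith [key]

lemma col_id (A : Matrix (Fin (m+1)) (Fin (m+1)) ℝ) (h : Aᵀ * Jm m * A = Jm m) :
    ∑ k : Fin m, A k.castSucc (Fin.last m) ^ 2 = A (Fin.last m) (Fin.last m) ^ 2 - 1 := by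
  have key : (Aᵀ * Jm m * A) (Fin.last m) (Fin.last m)
      = ∑ k, A k (Fin.last m) * (if k = Fin.last m then (-1:ℝ) else 1) * A k (Fin.last m) := by
    rw [mul_apply]
    refine Finset.sum_congr rfl fun k _ => ?_
    rw [Jm, mul_diagonal, transpose_apply]
  rw [h] at key
  rw [Jm, diagonal_apply_eq, if_pos rfl, Fin.sum_univ_castSucc] at key
  simp only [castSucc_ne_last, if_false, if_pos rfl, mul_one] at key
  norm_num at key
  have : ∑ k : Fin m, A k.castSucc (Fin.last m) ^ 2
      = ∑ k : Fin m, A k.castSucc (Fin.last m) * A k.castSucc (Fin.last m) :=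
    Finset.sum_congr rfl fun k _ => sq _
  rw [this]
  nlinarith [key]

lemma diag_ge_one (C : Matrix (Fin (m+1)) (Fin (m+1)) ℝ)
    (hrow : ∑ k : Fin m, C (Fin.last m) k.castSucc ^ 2 = C (Fin.last m) (Fin.last m) ^ 2 - 1)
    (hcol : ∑ k : Fin m, C k.castSucc (Fin.last m) ^ 2 = C (Fin.last m) (Fin.last m) ^ 2 - 1) :
    1 ≤ (C * C) (Fin.last m) (Fin.last m) := by
  rw [mul_apply, Fin.sum_univ_castSucc]
  set a := C (Fin.last m) (Fin.last m) with ha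
  set s := ∑ k : Fin m, C (Fin.last m) k.castSucc * C k.castSucc (Fin.last m) with hs
  have hcs := Finset.sum_mul_sq_le_sq_mul_sq Finset.univ
    (fun k : Fin m => C (Fin.last m) k.castSucc) (fun k => C k.castSucc (Fin.last m))
  rw [hrow, hcol, ← hs] at hcs
  have hge : (0:ℝ) ≤ a ^ 2 - 1 := by
    rw [← hrow]; exact Finset.sum_nonneg fun k _ => sq_nonneg _
  nlinarith [hcs, hge, sq_nonneg (s + (a ^ 2 - 1))]

lemma cone_mem (E : Matrix (Fin (m+1)) (Fin (m+1)) ℝ)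
    (h : Eᵀ * Jm m * E = Jm m) (hd : 1 ≤ E (Fin.last m) (Fin.last m))
    {x : Fin (m+1) → ℝ} (hx : x ∈ iceCream m) : E.mulVec x ∈ iceCream m := by
  obtain ⟨hx1, hx2⟩ := hx
  constructor
  · have hq := quad_pres E h x
    rw [quad_val, quad_val] at hq
    linarith
  · have hrow := row_id E (rev_rel E h)
    have hmv : E.mulVec x (Fin.last m)
        = (∑ k : Fin m, E (Fin.last m) k.castSucc * x k.castSucc)
          + E (Fin.last m) (Fin.last m) * x (Fin.last m) := by
      rw [mulVec, dotProduct, Fin.sum_univ_castSucc]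
    rw [hmv]
    set a := E (Fin.last m) (Fin.last m)
    set s := ∑ k : Fin m, E (Fin.last m) k.castSucc * x k.castSucc with hs
    have hcs := Finset.sum_mul_sq_le_sq_mul_sq Finset.univ
      (fun k : Fin m => E (Fin.last m) k.castSucc) (fun k => x k.castSucc)
    rw [hrow, ← hs] at hcs
    have hXnn : (0:ℝ) ≤ ∑ i : Fin m, x i.castSucc ^ 2 :=
      Finset.sum_nonneg fun k _ => sq_nonneg _
    have h1 : s ^ 2 ≤ (a ^ 2 - 1) * x (Fin.last m) ^ 2 := by
      calc s ^ 2 ≤ (a ^ 2 - 1) * ∑ i : Fin m, x i.castSucc ^ 2 := hcs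
        _ ≤ (a ^ 2 - 1) * x (Fin.last m) ^ 2 := by
            apply mul_le_mul_of_nonneg_left hx1; nlinarith
    nlinarith [h1, mul_nonneg (le_trans zero_le_one hd) hx2, sq_nonneg (x (Fin.last m))]

lemma cone_smul {c : ℝ} (hc : 0 ≤ c) {x : Fin (m+1) → ℝ} (hx : x ∈ iceCream m) :
    c • x ∈ iceCream m := by
  obtain ⟨hx1, hx2⟩ := hx
  constructor
  · simp only [Pi.smul_apply, smul_eq_mul, mul_pow, ← Finset.mul_sum]
    exact mul_le_mul_of_nonneg_left hx1 (by positivity)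
  · exact mul_nonneg hc hx2

lemma smul_one_diag (n : ℕ) (α : ℝ) :
    α • (1 : Matrix (Fin n) (Fin n) ℝ) = diagonal (fun _ => α) := by
  ext i j
  by_cases h : i = j <;>
    simp [h, Matrix.smul_apply, Matrix.one_apply, Matrix.diagonal_apply]

lemma exp_smul_one (n : ℕ) (α : ℝ) :
    exp (α • (1 : Matrix (Fin n) (Fin n) ℝ)) = Real.exp α • 1 := by
  rw [smul_one_diag, Matrix.exp_diagonal, Pi.exp_def, smul_one_diag]
  funext i
  simp [← Real.exp_eq_exp_ℝ]

lemma mapsTo_cone (α : ℝ) (B₁ : Matrix (Fin m) (Fin m) ℝ) (hB₁ : B₁ᵀ = -B₁) (b : Fin m → ℝ)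
    {x : Fin (m+1) → ℝ} (hx : x ∈ iceCream m) :
    (exp (α • (1 : Matrix (Fin (m+1)) (Fin (m+1)) ℝ) + Bmat B₁ b)).mulVec x
      ∈ iceCream m := by
  have hskew := Bmat_skew B₁ hB₁ b
  have hhalf : ((2⁻¹:ℝ) • Bmat B₁ b)ᵀ = -(Jm m * ((2⁻¹:ℝ) • Bmat B₁ b) * Jm m) := by
    rw [transpose_smul, hskew, Matrix.mul_smul, Matrix.smul_mul, smul_neg]
  set C := exp ((2⁻¹:ℝ) • Bmat B₁ b) with hC
  have hCrel := exp_J_rel _ hhalf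
  have hCC : C * C = exp (Bmat B₁ b) := by
    rw [hC, ← Matrix.exp_add_of_commute _ _ (Commute.refl _), ← add_smul]
    norm_num
  have hErel := exp_J_rel _ hskew
  have hd : 1 ≤ (exp (Bmat B₁ b)) (Fin.last m) (Fin.last m) := by
    rw [← hCC]
    exact diag_ge_one C (row_id C (rev_rel C hCrel)) (col_id C hCrel)
  have hsplit : exp (α • (1 : Matrix (Fin (m+1)) (Fin (m+1)) ℝ) + Bmat B₁ b)
      = Real.exp α • exp (Bmat B₁ b) := by
    rw [Matrix.exp_add_of_commute _ _ ((Commute.one_left (Bmat B₁ b)).smul_left α),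
      exp_smul_one, smul_mul_assoc, one_mul]
  rw [hsplit, smul_mulVec]
  exact cone_smul (Real.exp_pos α).le (cone_mem _ hErel hd hx)

end IceCreamAux

/-- For `α ∈ ℝ`, `B₁` skew-symmetric of size `m = n - 1`, and `b ∈ ℝ^{n-1}`, the matrix
`exp(αI + B)` with `B = [[B₁, b], [bᵀ, 0]]` maps the ice-cream cone `K_n` onto itself. -/
theorem exp_mem_aut_iceCream {m : ℕ} (hm : 1 ≤ m) (α : ℝ)
    (B₁ : Matrix (Fin m) (Fin m) ℝ) (hB₁ : B₁ᵀ = -B₁) (b : Fin m → ℝ) :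
    (NormedSpace.exp
        (α • (1 : Matrix (Fin (m + 1)) (Fin (m + 1)) ℝ) +
          Matrix.reindex finSumFinEquiv finSumFinEquiv
            (Matrix.fromBlocks B₁ (Matrix.of fun i (_ : Fin 1) => b i)
              (Matrix.of fun (_ : Fin 1) j => b j) 0))).mulVec '' iceCream m
      = iceCream m := by
  open IceCreamAux NormedSpace in
  change (exp (α • (1 : Matrix (Fin (m+1)) (Fin (m+1)) ℝ) + Bmat B₁ b)).mulVec '' iceCream m
    = iceCream m
  ext y
  constructor
  · rintro ⟨x, hx, rfl⟩
    exact IceCreamAux.mapsTo_cone α B₁ hB₁ b hx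
  · intro hy
    have hB₁' : (-B₁)ᵀ = -(-B₁) := by rw [transpose_neg, hB₁]
    refine ⟨(exp ((-α) • (1 : Matrix (Fin (m+1)) (Fin (m+1)) ℝ)
        + Bmat (-B₁) (-b))).mulVec y,
      IceCreamAux.mapsTo_cone (-α) (-B₁) hB₁' (-b) hy, ?_⟩
    have hneg : (-α) • (1 : Matrix (Fin (m+1)) (Fin (m+1)) ℝ) + Bmat (-B₁) (-b)
        = -(α • (1 : Matrix (Fin (m+1)) (Fin (m+1)) ℝ) + Bmat B₁ b) := by
      rw [Bmat_neg, neg_add, neg_smul]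
    rw [mulVec_mulVec, hneg,
      ← Matrix.exp_add_of_commute _ _ ((Commute.refl (α • (1 : Matrix (Fin (m+1)) (Fin (m+1)) ℝ) + Bmat B₁ b)).neg_right),
      add_neg_cancel, NormedSpace.exp_zero, one_mulVec]
end

section
/- Let A be a real n×n Metzler matrix. Then the following statements are equivalent: (1) A is Hurwitz; (2) A is invertible and all entries of A⁻¹ are nonpositive; (3) there exists z ∈ ℝⁿ with all entries strictly positive such that −Az has all entries strictly positive; (4) there exists ξ ∈ ℝⁿ with all entries strictly positive such that −Aᵀξ has all entries strictly positive. -/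
open Matrix
open scoped ENNReal NNReal

lemma mem_spectrum_iff_eigen {n : ℕ} (M : Matrix (Fin n) (Fin n) ℂ) (μ : ℂ) :
    μ ∈ spectrum ℂ M ↔ ∃ v, v ≠ 0 ∧ M *ᵥ v = μ • v := by
  rw [spectrum.mem_iff, Matrix.isUnit_iff_isUnit_det, isUnit_iff_ne_zero, not_ne_iff,
    ← Matrix.exists_mulVec_eq_zero_iff]
  constructor
  · rintro ⟨v, hv, hMv⟩
    refine ⟨v, hv, ?_⟩
    have h2 : (algebraMap ℂ (Matrix (Fin n) (Fin n) ℂ)) μ *ᵥ v = μ • v := by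
      rw [Algebra.algebraMap_eq_smul_one, Matrix.smul_mulVec, Matrix.one_mulVec]
    have : μ • v - M *ᵥ v = 0 := by rw [← h2, ← Matrix.sub_mulVec]; exact hMv
    exact (sub_eq_zero.mp this).symm
  · rintro ⟨v, hv, hMv⟩
    refine ⟨v, hv, ?_⟩
    rw [Matrix.sub_mulVec, Algebra.algebraMap_eq_smul_one, Matrix.smul_mulVec,
      Matrix.one_mulVec, hMv, sub_self]

-- key comparison lemma
lemma key_nonpos {n : ℕ} (A : Matrix (Fin n) (Fin n) ℝ)
    (hMetzler : ∀ i j, i ≠ j → 0 ≤ A i j) {z : Fin n → ℝ}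
    (hz : ∀ i, 0 < z i) (hAz : ∀ i, A.mulVec z i < 0)
    (x : Fin n → ℝ) (hx : ∀ i, 0 ≤ A.mulVec x i) : ∀ i, x i ≤ 0 := by
  by_contra hcon
  push_neg at hcon
  obtain ⟨i0, hi0⟩ := hcon
  obtain ⟨k, -, hk⟩ := Finset.exists_max_image Finset.univ (fun j => x j / z j)
    ⟨i0, Finset.mem_univ i0⟩
  have hkmax : ∀ j, x j / z j ≤ x k / z k := fun j => hk j (Finset.mem_univ j)
  set t := x k / z k with ht
  have htpos : 0 < t := lt_of_lt_of_le (div_pos hi0 (hz i0)) (hkmax i0)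
  have hxk : x k = t * z k := by rw [ht]; exact (div_mul_cancel₀ _ (hz k).ne').symm
  have hle : ∀ j, x j ≤ t * z j := fun j => by
    have := hkmax j
    rw [div_le_iff₀ (hz j)] at this
    linarith [this]
  have hsum : A.mulVec x k ≤ t * A.mulVec z k := by
    simp only [Matrix.mulVec, dotProduct]
    rw [Finset.mul_sum]
    refine Finset.sum_le_sum fun j _ => ?_
    rcases eq_or_ne j k with rfl | hjk
    · rw [hxk]; ring_nf; exact le_refl _
    · have h1 : 0 ≤ A k j := hMetzler k j (Ne.symm hjk)
      calc A k j * x j ≤ A k j * (t * z j) := by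
            exact mul_le_mul_of_nonneg_left (hle j) h1
        _ = t * (A k j * z j) := by ring
  have : A.mulVec x k < 0 := lt_of_le_of_lt hsum (by
    have := hAz k
    nlinarith)
  exact absurd (hx k) (not_le.mpr this)

-- (3) implies (2)
lemma inv_nonpos_of_pos_vec {n : ℕ} (A : Matrix (Fin n) (Fin n) ℝ)
    (hMetzler : ∀ i j, i ≠ j → 0 ≤ A i j) {z : Fin n → ℝ}
    (hz : ∀ i, 0 < z i) (hAz : ∀ i, A.mulVec z i < 0) :
    IsUnit A ∧ ∀ i j, A⁻¹ i j ≤ 0 := by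
  have hinj : Function.Injective A.mulVec := by
    intro x y hxy
    have h0 : A.mulVec (x - y) = 0 := by rw [Matrix.mulVec_sub, hxy, sub_self]
    have h1 : ∀ i, x i - y i ≤ 0 := by
      refine key_nonpos A hMetzler hz hAz (x - y) fun i => ?_
      rw [h0]; simp
    have h2 : ∀ i, y i - x i ≤ 0 := by
      refine key_nonpos A hMetzler hz hAz (y - x) fun i => ?_
      have : A.mulVec (y - x) = 0 := by rw [Matrix.mulVec_sub, hxy, sub_self]
      rw [this]; simp
    funext i
    have := h1 i; have := h2 i
    linarith
  have hU : IsUnit A := Matrix.mulVec_injective_iff_isUnit.mp hinj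
  refine ⟨hU, fun i j => ?_⟩
  have hmul : A * A⁻¹ = 1 := Matrix.mul_nonsing_inv A ((Matrix.isUnit_iff_isUnit_det A).mp hU)
  have hcol : A.mulVec (fun i => A⁻¹ i j) = fun i => (1 : Matrix (Fin n) (Fin n) ℝ) i j := by
    funext i
    simp only [Matrix.mulVec, dotProduct]
    have := congrArg (fun M => M i j) hmul
    simpa [Matrix.mul_apply] using this
  have := key_nonpos A hMetzler hz hAz (fun i => A⁻¹ i j) (fun i => by
    rw [hcol]
    by_cases h : i = j <;> simp [Matrix.one_apply, h])
  exact this i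

-- (2) implies (3)
lemma pos_vec_of_inv_nonpos {n : ℕ} (A : Matrix (Fin n) (Fin n) ℝ)
    (hU : IsUnit A) (hinv : ∀ i j, A⁻¹ i j ≤ 0) :
    ∃ z : Fin n → ℝ, (∀ i, 0 < z i) ∧ ∀ i, A.mulVec z i < 0 := by
  refine ⟨-(A⁻¹.mulVec fun _ => 1), fun i => ?_, fun i => ?_⟩
  · have hdet : IsUnit A.det := (Matrix.isUnit_iff_isUnit_det A).mp hU
    have hUinv : IsUnit A⁻¹ := Matrix.isUnit_nonsing_inv_iff.mpr hU
    -- row i of A⁻¹ has a nonzero entry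
    have hrow : ∃ j, A⁻¹ i j ≠ 0 := by
      by_contra hall
      push_neg at hall
      have : A⁻¹.det = 0 := Matrix.det_eq_zero_of_row_eq_zero i hall
      exact ((Matrix.isUnit_iff_isUnit_det A⁻¹).mp hUinv).ne_zero this
    obtain ⟨j0, hj0⟩ := hrow
    have hj0' : A⁻¹ i j0 < 0 := lt_of_le_of_ne (hinv i j0) hj0
    simp only [Pi.neg_apply, Matrix.mulVec, dotProduct, mul_one]
    have : ∑ j, A⁻¹ i j < 0 := by
      have hlt : ∑ j, A⁻¹ i j < ∑ j : Fin n, (0 : ℝ) :=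
        Finset.sum_lt_sum (fun j _ => hinv i j) ⟨j0, Finset.mem_univ j0, hj0'⟩
      simpa using hlt
    linarith
  · have hmul : A * A⁻¹ = 1 := Matrix.mul_nonsing_inv A ((Matrix.isUnit_iff_isUnit_det A).mp hU)
    have : A.mulVec (-(A⁻¹.mulVec fun _ => 1)) = -(fun _ => (1:ℝ)) := by
      rw [Matrix.mulVec_neg, Matrix.mulVec_mulVec, hmul, Matrix.one_mulVec]
    rw [this]
    simp

-- (3) implies (1)
lemma hurwitz_of_pos_vec {n : ℕ} (A : Matrix (Fin n) (Fin n) ℝ)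
    (hMetzler : ∀ i j, i ≠ j → 0 ≤ A i j) {z : Fin n → ℝ}
    (hz : ∀ i, 0 < z i) (hAz : ∀ i, A.mulVec z i < 0) : IsHurwitz A := by
  intro μ hμ
  obtain ⟨v, hv, hMv⟩ := (mem_spectrum_iff_eigen _ μ).mp hμ
  -- pick k maximizing ‖v j‖ / z j
  have hne : Nonempty (Fin n) := by
    rcases Nat.eq_zero_or_pos n with rfl | hn
    · exact absurd (funext fun i => i.elim0) hv
    · exact ⟨⟨0, hn⟩⟩
  obtain ⟨k, -, hk⟩ := Finset.exists_max_image Finset.univ (fun j => ‖v j‖ / z j)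
    Finset.univ_nonempty
  have hkmax : ∀ j, ‖v j‖ / z j ≤ ‖v k‖ / z k := fun j => hk j (Finset.mem_univ j)
  set t := ‖v k‖ / z k with ht
  have htpos : 0 < t := by
    obtain ⟨i0, hi0⟩ : ∃ i, v i ≠ 0 := Function.ne_iff.mp hv
    exact lt_of_lt_of_le (div_pos (norm_pos_iff.mpr hi0) (hz i0)) (hkmax i0)
  have hvk : ‖v k‖ = t * z k := by rw [ht]; exact ((div_mul_cancel₀ _ (hz k).ne').symm)
  have hle : ∀ j, ‖v j‖ ≤ t * z j := fun j => by
    have := hkmax j; rw [div_le_iff₀ (hz j)] at this; linarith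
  -- eigen equation at row k
  have heig : μ * v k = ∑ j, (A k j : ℂ) * v j := by
    have := congrFun hMv k
    simp only [Matrix.mulVec, dotProduct, Pi.smul_apply, smul_eq_mul,
      Matrix.map_apply] at this
    rw [← this]
  have hsplit : (μ - (A k k : ℂ)) * v k = ∑ j ∈ Finset.univ.erase k, (A k j : ℂ) * v j := by
    rw [sub_mul, heig]
    rw [← Finset.add_sum_erase _ _ (Finset.mem_univ k)]
    ring
  have hnorm : ‖μ - (A k k : ℂ)‖ * (t * z k) ≤ t * (A.mulVec z k - A k k * z k) := by
    rw [← hvk, ← norm_mul, hsplit]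
    calc ‖∑ j ∈ Finset.univ.erase k, (A k j : ℂ) * v j‖
        ≤ ∑ j ∈ Finset.univ.erase k, ‖(A k j : ℂ) * v j‖ := norm_sum_le _ _
      _ ≤ ∑ j ∈ Finset.univ.erase k, A k j * (t * z j) := by
          refine Finset.sum_le_sum fun j hj => ?_
          have hA : 0 ≤ A k j := hMetzler k j (Finset.ne_of_mem_erase hj).symm
          rw [norm_mul, Complex.norm_real, Real.norm_eq_abs, abs_of_nonneg hA]
          exact mul_le_mul_of_nonneg_left (hle j) hA
      _ = t * ∑ j ∈ Finset.univ.erase k, A k j * z j := by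
          rw [Finset.mul_sum]; exact Finset.sum_congr rfl fun j _ => by ring
      _ = t * (A.mulVec z k - A k k * z k) := by
          congr 1
          have : A.mulVec z k = ∑ j, A k j * z j := rfl
          rw [this, ← Finset.add_sum_erase _ _ (Finset.mem_univ k)]
          ring
  have hzk := hz k
  have hAzk := hAz k
  have hfinal : ‖μ - (A k k : ℂ)‖ < -A k k := by
    have h1 : ‖μ - (A k k : ℂ)‖ * (t * z k) < t * (-A k k * z k) := by
      refine lt_of_le_of_lt hnorm ?_
      have : A.mulVec z k - A k k * z k < -A k k * z k := by linarith
      nlinarith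
    have h2 : 0 < t * z k := mul_pos htpos hzk
    nlinarith [norm_nonneg (μ - (A k k : ℂ))]
  have hre : (μ - (A k k : ℂ)).re ≤ ‖μ - (A k k : ℂ)‖ := Complex.re_le_norm _
  have : μ.re - A k k ≤ ‖μ - (A k k : ℂ)‖ := by
    simpa using hre
  linarith

lemma pow_entry_nonneg {n : ℕ} {P : Matrix (Fin n) (Fin n) ℝ} (hP : ∀ i j, 0 ≤ P i j) :
    ∀ (m : ℕ) (i j : Fin n), 0 ≤ (P ^ m) i j := by
  intro m
  induction m with
  | zero => intro i j; by_cases h : i = j <;> simp [Matrix.one_apply, h]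
  | succ m ih =>
      intro i j
      rw [pow_succ, Matrix.mul_apply]
      exact Finset.sum_nonneg fun k _ => mul_nonneg (ih i k) (hP k j)

attribute [local instance] Matrix.linftyOpNormedRing Matrix.linftyOpNormedAlgebra

-- (1) implies (3)
lemma pos_vec_of_hurwitz {n : ℕ} (A : Matrix (Fin n) (Fin n) ℝ)
    (hMetzler : ∀ i j, i ≠ j → 0 ≤ A i j) (hH : IsHurwitz A) :
    ∃ z : Fin n → ℝ, (∀ i, 0 < z i) ∧ ∀ i, A.mulVec z i < 0 := by
  rcases Nat.eq_zero_or_pos n with rfl | hn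
  · exact ⟨fun _ => 1, fun i => i.elim0, fun i => i.elim0⟩
  haveI : Nonempty (Fin n) := ⟨⟨0, hn⟩⟩
  set Ac := A.map (fun a => (a : ℂ)) with hAc
  have hcomp : IsCompact (spectrum ℂ Ac) := spectrum.isCompact Ac
  have hnon : (spectrum ℂ Ac).Nonempty := spectrum.nonempty Ac
  obtain ⟨μR, hμR, hmaxR⟩ := hcomp.exists_isMaxOn hnon continuous_norm.continuousOn
  obtain ⟨μr, hμr, hmaxr⟩ := hcomp.exists_isMaxOn hnon Complex.continuous_re.continuousOn
  obtain ⟨R, hR0, hmaxR'⟩ : ∃ R, 0 ≤ R ∧ ∀ μ ∈ spectrum ℂ Ac, ‖μ‖ ≤ R :=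
    ⟨‖μR‖, norm_nonneg _, fun μ h => hmaxR h⟩
  obtain ⟨δ, hδ, hδ'⟩ : ∃ δ, 0 < δ ∧ ∀ μ ∈ spectrum ℂ Ac, δ ≤ -μ.re := by
    refine ⟨-μr.re, neg_pos.mpr (hH μr hμr), fun μ h => ?_⟩
    have h4 := hmaxr h
    simp only [Set.mem_setOf_eq] at h4
    linarith
  obtain ⟨s, hs0, hsA, h2δs⟩ : ∃ s : ℝ, 0 < s ∧ (∀ i, -s ≤ A i i) ∧ R ^ 2 < 2 * δ * s := by
    have hRδ0 : 0 ≤ R ^ 2 / (2 * δ) := by positivity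
    set D := Finset.univ.sup' Finset.univ_nonempty (fun i : Fin n => |A i i|) with hDdef
    have hD : ∀ i, |A i i| ≤ D := fun i => by
      rw [hDdef]; exact Finset.le_sup' (fun i : Fin n => |A i i|) (Finset.mem_univ i)
    have hD0 : 0 ≤ D := le_trans (abs_nonneg (A ⟨0, hn⟩ ⟨0, hn⟩)) (hD ⟨0, hn⟩)
    refine ⟨1 + R ^ 2 / (2 * δ) + D, by linarith, fun i => ?_, ?_⟩
    · have h2 := neg_abs_le (A i i); have h3 := hD i; linarith
    · have h1 : R ^ 2 / (2 * δ) < 1 + R ^ 2 / (2 * δ) + D := by linarith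
      rw [div_lt_iff₀ (by linarith)] at h1
      linarith
  set P := (1 : Matrix (Fin n) (Fin n) ℝ) + s⁻¹ • A with hPdef
  have hP : ∀ i j, 0 ≤ P i j := by
    intro i j
    simp only [hPdef, Matrix.add_apply, Matrix.smul_apply, smul_eq_mul]
    rcases eq_or_ne i j with rfl | hij
    · rw [Matrix.one_apply_eq]
      have h1 : -s ≤ A i i := hsA i
      have h3 : s⁻¹ * (-s) ≤ s⁻¹ * A i i :=
        mul_le_mul_of_nonneg_left h1 (inv_nonneg.mpr hs0.le)
      rw [mul_neg, inv_mul_cancel₀ hs0.ne'] at h3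
      linarith
    · rw [Matrix.one_apply_ne hij]
      have := hMetzler i j hij
      positivity
  set Pc := (1 : Matrix (Fin n) (Fin n) ℂ) + (s⁻¹ : ℂ) • Ac with hPcdef
  have hPc : P.map (fun a => (a : ℂ)) = Pc := by
    ext i j
    simp only [hPdef, hPcdef, Matrix.map_apply, Matrix.add_apply, Matrix.smul_apply,
      smul_eq_mul, hAc]
    push_cast
    rcases eq_or_ne i j with rfl | hij
    · rw [Matrix.one_apply_eq, Matrix.one_apply_eq]; push_cast; ring
    · rw [Matrix.one_apply_ne hij, Matrix.one_apply_ne hij]; push_cast; ring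
  -- all eigenvalues of Pc lie strictly inside unit disk
  have hspec : ∀ ν ∈ spectrum ℂ Pc, ‖ν‖₊ < 1 := by
    intro ν hν
    obtain ⟨v, hv, hMv⟩ := (mem_spectrum_iff_eigen _ ν).mp hν
    have hAv : Ac *ᵥ v = ((s : ℂ) * (ν - 1)) • v := by
      have h1 : ν • v = v + (s⁻¹ : ℂ) • (Ac *ᵥ v) := by
        rw [← hMv, hPcdef, Matrix.add_mulVec, Matrix.one_mulVec, Matrix.smul_mulVec]
      have h2 : (s⁻¹ : ℂ) • (Ac *ᵥ v) = ν • v - v := by rw [h1]; abel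
      have hsne : (s : ℂ) ≠ 0 := by exact_mod_cast hs0.ne'
      calc Ac *ᵥ v = (s : ℂ) • ((s⁻¹ : ℂ) • (Ac *ᵥ v)) := by
            rw [smul_smul, mul_inv_cancel₀ hsne, one_smul]
        _ = (s : ℂ) • (ν • v - v) := by rw [h2]
        _ = ((s : ℂ) * (ν - 1)) • v := by module
    set μ := (s : ℂ) * (ν - 1) with hμdef
    have hμmem : μ ∈ spectrum ℂ Ac := (mem_spectrum_iff_eigen _ _).mpr ⟨v, hv, hAv⟩
    have hμre : μ.re < 0 := hH μ hμmem
    have hμnorm : ‖μ‖ ≤ R := hmaxR' μ hμmem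
    have hμδ : δ ≤ -μ.re := hδ' μ hμmem
    have hre : μ.re = s * (ν.re - 1) := by
      rw [hμdef]
      simp [Complex.mul_re, Complex.sub_re, Complex.sub_im]
    have him : μ.im = s * ν.im := by
      rw [hμdef]
      simp [Complex.mul_im, Complex.sub_re, Complex.sub_im]
    have hμsq : μ.re ^ 2 + μ.im ^ 2 ≤ R ^ 2 := by
      have h1 : ‖μ‖ ^ 2 = μ.re ^ 2 + μ.im ^ 2 := by
        rw [Complex.sq_norm, Complex.normSq_apply]; ring
      nlinarith [norm_nonneg μ]
    have hνsq : ν.re ^ 2 + ν.im ^ 2 < 1 := by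
      have e1 : μ.re ^ 2 + μ.im ^ 2 = s ^ 2 * ((ν.re - 1) ^ 2 + ν.im ^ 2) := by
        rw [hre, him]; ring
      have e2 : 2 * δ * s ≤ 2 * (-μ.re) * s := by nlinarith
      have e3 : 2 * (-μ.re) * s = -(2 * s ^ 2 * (ν.re - 1)) := by rw [hre]; ring
      have e4 : s ^ 2 * (ν.re ^ 2 + ν.im ^ 2 - 1) < 0 := by nlinarith
      nlinarith [pow_pos hs0 2]
    have hνnorm : ‖ν‖ < 1 := by
      have h1 : ‖ν‖ ^ 2 = ν.re ^ 2 + ν.im ^ 2 := by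
        rw [Complex.sq_norm, Complex.normSq_apply]; ring
      nlinarith [norm_nonneg ν]
    rw [← NNReal.coe_lt_coe]
    simpa using hνnorm
  -- spectral radius of Pc is < 1
  have hρ : spectralRadius ℂ Pc < (1 : ℝ≥0) :=
    spectrum.spectralRadius_lt_of_forall_lt_of_nonempty (spectrum.nonempty Pc) hspec
  have hG := spectrum.pow_nnnorm_pow_one_div_tendsto_nhds_spectralRadius Pc
  have hρ1 : spectralRadius ℂ Pc < (1 : ℝ≥0∞) := by simpa using hρ
  have hev : ∀ᶠ (m : ℕ) in Filter.atTop, (‖Pc ^ m‖₊ : ℝ≥0∞) ^ (1 / (m : ℝ)) < 1 :=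
    hG.eventually_lt_const hρ1
  obtain ⟨m, hm, hm1⟩ := (hev.and (Filter.eventually_ge_atTop 1)).exists
  have hPm : ‖Pc ^ m‖ < 1 := by
    by_contra hle
    push_neg at hle
    have h1 : (1 : ℝ≥0∞) ≤ (‖Pc ^ m‖₊ : ℝ≥0∞) := by
      rw [ENNReal.one_le_coe_iff, ← NNReal.coe_le_coe]
      simpa using hle
    have h2 : (1 : ℝ≥0∞) ≤ (‖Pc ^ m‖₊ : ℝ≥0∞) ^ (1 / (m : ℝ)) := by
      calc (1 : ℝ≥0∞) = 1 ^ (1 / (m : ℝ)) := (ENNReal.one_rpow _).symm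
        _ ≤ (‖Pc ^ m‖₊ : ℝ≥0∞) ^ (1 / (m : ℝ)) :=
            ENNReal.rpow_le_rpow h1 (by positivity)
    exact absurd hm (not_lt.mpr h2)
  have hPcm : Pc ^ m = (P ^ m).map (fun a => (a : ℂ)) := by
    rw [← hPc]
    have h5 : P.map (fun a => (a : ℂ)) = Complex.ofRealHom.mapMatrix P := rfl
    rw [h5, ← map_pow]
    rfl
  have hrow : ∀ i, ∑ j, (P ^ m) i j < 1 := by
    intro i
    have h1 : ∑ j, (P ^ m) i j ≤ ‖Pc ^ m‖ := by
      rw [Matrix.linfty_opNorm_def]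
      have h2 : ((∑ j, ‖(Pc ^ m) i j‖₊ : ℝ≥0) : ℝ) ≤
          ((Finset.univ.sup fun i => ∑ j, ‖(Pc ^ m) i j‖₊ : ℝ≥0) : ℝ) := by
        exact_mod_cast Finset.le_sup (f := fun i => ∑ j, ‖(Pc ^ m) i j‖₊) (Finset.mem_univ i)
      refine le_trans ?_ h2
      rw [NNReal.coe_sum]
      refine le_of_eq (Finset.sum_congr rfl fun j _ => ?_)
      rw [hPcm]
      simp only [Matrix.map_apply, coe_nnnorm, Complex.norm_real]
      rw [Real.norm_eq_abs, abs_of_nonneg (pow_entry_nonneg hP m i j)]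
    linarith
  -- construct z
  set one : Fin n → ℝ := fun _ => 1 with honedef
  set z : Fin n → ℝ := ∑ k ∈ Finset.range m, (P ^ k) *ᵥ one with hzdef
  have hz_i : ∀ i, z i = ∑ k ∈ Finset.range m, ((P ^ k) *ᵥ one) i := fun i => by
    rw [hzdef, Finset.sum_apply]
  have h0vec : (P ^ 0) *ᵥ one = one := by rw [pow_zero, Matrix.one_mulVec]
  have hzpos : ∀ i, 0 < z i := by
    intro i
    rw [hz_i i]
    have hterm : ∀ k ∈ Finset.range m, 0 ≤ ((P ^ k) *ᵥ one) i := by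
      intro k _
      have h8 : ((P ^ k) *ᵥ one) i = ∑ j, (P ^ k) i j := by
        simp [Matrix.mulVec, dotProduct, honedef]
      rw [h8]
      exact Finset.sum_nonneg fun j _ => pow_entry_nonneg hP k i j
    calc (0:ℝ) < 1 := one_pos
      _ = ((P ^ 0) *ᵥ one) i := by rw [h0vec]
      _ ≤ ∑ k ∈ Finset.range m, ((P ^ k) *ᵥ one) i :=
          Finset.single_le_sum hterm (Finset.mem_range.mpr hm1)
  have hPz : P *ᵥ z = ∑ k ∈ Finset.range m, (P ^ (k+1)) *ᵥ one := by
    rw [hzdef]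
    have h6 : P *ᵥ (∑ k ∈ Finset.range m, (P ^ k) *ᵥ one)
        = P.mulVecLin (∑ k ∈ Finset.range m, (P ^ k) *ᵥ one) := rfl
    rw [h6, map_sum]
    refine Finset.sum_congr rfl fun k _ => ?_
    show P *ᵥ ((P ^ k) *ᵥ one) = _
    rw [Matrix.mulVec_mulVec, ← pow_succ']
  have htel : ∀ i, (P *ᵥ z) i - z i = ((P ^ m) *ᵥ one) i - 1 := by
    intro i
    have h2 : (∑ k ∈ Finset.range m, ((P ^ k) *ᵥ one) i) + ((P ^ m) *ᵥ one) i
        = (∑ k ∈ Finset.range m, ((P ^ (k+1)) *ᵥ one) i) + ((P ^ 0) *ᵥ one) i := by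
      have h1 := Finset.sum_range_succ (fun k => ((P ^ k) *ᵥ one) i) m
      have h2' := Finset.sum_range_succ' (fun k => ((P ^ k) *ᵥ one) i) m
      rw [h1] at h2'
      exact h2' 
    have hPz_i : (P *ᵥ z) i = ∑ k ∈ Finset.range m, ((P ^ (k+1)) *ᵥ one) i := by
      rw [hPz, Finset.sum_apply]
    have h0i : ((P ^ 0) *ᵥ one) i = 1 := by rw [h0vec]
    rw [hz_i i, hPz_i]
    rw [h0i] at h2
    linarith
  have hAz : ∀ i, (A *ᵥ z) i < 0 := by
    intro i
    have hA_eq : A = s • (P - 1) := by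
      rw [hPdef]
      ext a b
      simp only [Matrix.smul_apply, Matrix.sub_apply, Matrix.add_apply, smul_eq_mul]
      field_simp
      ring
    have hstep : (A *ᵥ z) i = s * ((P *ᵥ z) i - z i) := by
      calc (A *ᵥ z) i = (s • ((P - 1) *ᵥ z)) i := by rw [← Matrix.smul_mulVec, ← hA_eq]
        _ = s * ((P *ᵥ z) i - z i) := by
            rw [Matrix.sub_mulVec]
            simp [Matrix.one_mulVec]
    rw [hstep, htel i]
    have hPm1 : ((P ^ m) *ᵥ one) i < 1 := by
      have h7 : ((P ^ m) *ᵥ one) i = ∑ j, (P ^ m) i j := by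
        simp [Matrix.mulVec, dotProduct, honedef]
      rw [h7]; exact hrow i
    nlinarith
  exact ⟨z, hzpos, hAz⟩

lemma transpose_spectrum {n : ℕ} (M : Matrix (Fin n) (Fin n) ℂ) :
    spectrum ℂ Mᵀ = spectrum ℂ M := by
  ext μ
  rw [spectrum.mem_iff, spectrum.mem_iff, not_iff_not]
  have h2 : algebraMap ℂ (Matrix (Fin n) (Fin n) ℂ) μ - Mᵀ
      = (algebraMap ℂ (Matrix (Fin n) (Fin n) ℂ) μ - M)ᵀ := by
    rw [Algebra.algebraMap_eq_smul_one, Matrix.transpose_sub, Matrix.transpose_smul,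
      Matrix.transpose_one]
  rw [h2, Matrix.isUnit_transpose]

lemma isHurwitz_transpose_iff {n : ℕ} (A : Matrix (Fin n) (Fin n) ℝ) :
    IsHurwitz Aᵀ ↔ IsHurwitz A := by
  unfold IsHurwitz
  rw [show Aᵀ.map (fun a => (a : ℂ)) = (A.map (fun a => (a : ℂ)))ᵀ from Matrix.transpose_map,
    transpose_spectrum]

/-- Stability criteria for Metzler matrices. -/
theorem metzler_hurwitz_tfae {n : ℕ} (A : Matrix (Fin n) (Fin n) ℝ)
    (hMetzler : ∀ i j, i ≠ j → 0 ≤ A i j) :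
    List.TFAE
      [IsHurwitz A,
       IsUnit A ∧ ∀ i j, A⁻¹ i j ≤ 0,
       ∃ z : Fin n → ℝ, (∀ i, 0 < z i) ∧ ∀ i, 0 < (-(A.mulVec z)) i,
       ∃ ξ : Fin n → ℝ, (∀ i, 0 < ξ i) ∧ ∀ i, 0 < (-(Aᵀ.mulVec ξ)) i] := by
  have hMT : ∀ i j, i ≠ j → 0 ≤ Aᵀ i j := fun i j hij => hMetzler j i (Ne.symm hij)
  have hconv : ∀ (B : Matrix (Fin n) (Fin n) ℝ) (z : Fin n → ℝ),
      (∀ i, 0 < (-(B.mulVec z)) i) ↔ ∀ i, B.mulVec z i < 0 := by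
    intro B z
    constructor <;> intro h i <;> have := h i <;>
      simp only [Pi.neg_apply, neg_pos] at this ⊢ <;> exact this
  tfae_have 1 → 3 := by
    intro h
    obtain ⟨z, hz, hAz⟩ := pos_vec_of_hurwitz A hMetzler h
    exact ⟨z, hz, (hconv A z).mpr hAz⟩
  tfae_have 3 → 2 := by
    rintro ⟨z, hz, hAz⟩
    exact inv_nonpos_of_pos_vec A hMetzler hz ((hconv A z).mp hAz)
  tfae_have 2 → 3 := by
    rintro ⟨hU, hinv⟩
    obtain ⟨z, hz, hAz⟩ := pos_vec_of_inv_nonpos A hU hinv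
    exact ⟨z, hz, (hconv A z).mpr hAz⟩
  tfae_have 3 → 1 := by
    rintro ⟨z, hz, hAz⟩
    exact hurwitz_of_pos_vec A hMetzler hz ((hconv A z).mp hAz)
  tfae_have 1 → 4 := by
    intro h
    obtain ⟨z, hz, hAz⟩ := pos_vec_of_hurwitz Aᵀ hMT ((isHurwitz_transpose_iff A).mpr h)
    exact ⟨z, hz, (hconv Aᵀ z).mpr hAz⟩
  tfae_have 4 → 1 := by
    rintro ⟨z, hz, hAz⟩
    exact (isHurwitz_transpose_iff A).mp
      (hurwitz_of_pos_vec Aᵀ hMT hz ((hconv Aᵀ z).mp hAz))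
  tfae_finish
end
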